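/- arXiv:2506.07832 — 5 statements merged into one kernel-verified Lean document; each statement's English description precedes it below -/
import Mathlib

section
/- Cousin's Lemma for compact lines: if K is a compact line and δ is a gauge on K (a function assigning to each x ∈ K an open interval δ(x) of K with x ∈ δ(x)), then K admits a δ-fine tagged partition, i.e., points 0_K = x_0 ≤ x_1 ≤ ... ≤ x_n = 1_K and tags t_i ∈ [x_{i-1}, x_i] with (x_{i-1}, x_i] ⊆ δ(t_i) for each i. -/
open Set Filter MeasureTheory

/-- A tagged partition of the interval `[a,b]` in a linear order `K`. -/
structure TaggedPartition (K : Type*) [LinearOrder K] (a b : K) where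
  n : ℕ
  x : ℕ → K
  t : ℕ → K
  x_zero : x 0 = a
  x_last : x n = b
  mono : ∀ i < n, x i ≤ x (i + 1)
  tag_mem : ∀ i < n, t (i + 1) ∈ Set.Icc (x i) (x (i + 1))

/-- A gauge on the interval `[a,b]` of `K`: each point of `[a,b]` is assigned a
relatively open subinterval of `[a,b]` containing it. -/
def IsGauge (K : Type*) [LinearOrder K] [TopologicalSpace K] (a b : K) (δ : K → Set K) : Prop :=
  ∀ x ∈ Set.Icc a b, x ∈ δ x ∧ (δ x).OrdConnected ∧ ∃ U, IsOpen U ∧ δ x = U ∩ Set.Icc a b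

/-- A tagged partition is `δ`-fine when `(x_{i-1}, x_i] ⊆ δ(t_i)` for all `i`. -/
def TaggedPartition.IsFine {K : Type*} [LinearOrder K] {a b : K}
    (P : TaggedPartition K a b) (δ : K → Set K) : Prop :=
  ∀ i < P.n, Set.Ioc (P.x i) (P.x (i + 1)) ⊆ δ (P.t (i + 1))

/-- The Riemann sum `S(f,G,P) = f(a)G(a) + Σ f(t_i)(G(x_i) - G(x_{i-1}))`. -/
noncomputable def riemannSum {K : Type*} [LinearOrder K] {a b : K}
    (f G : K → ℝ) (P : TaggedPartition K a b) : ℝ :=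
  f a * G a + ∑ i ∈ Finset.range P.n, f (P.t (i + 1)) * (G (P.x (i + 1)) - G (P.x i))

/-- `f` has Kurzweil–Stieltjes integral `A` with respect to `G` over `[a,b]`. -/
def HasIntegral {K : Type*} [LinearOrder K] [TopologicalSpace K]
    (f G : K → ℝ) (a b : K) (A : ℝ) : Prop :=
  ∀ ε : ℝ, 0 < ε → ∃ δ : K → Set K, IsGauge K a b δ ∧
    ∀ P : TaggedPartition K a b, P.IsFine δ → |riemannSum f G P - A| < ε

/-- `G` is amenable: right-continuous everywhere, and regulated (left limits exist at
left-dense points, right limits at right-dense points). -/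
def Amenable {K : Type*} [LinearOrder K] [TopologicalSpace K] [BoundedOrder K]
    (G : K → ℝ) : Prop :=
  (∀ x : K, ContinuousWithinAt G (Set.Ici x) x) ∧
  (∀ x : K, x ≠ ⊥ → (¬ ∃ y, y ⋖ x) → ∃ l, Filter.Tendsto G (nhdsWithin x (Set.Iio x)) (nhds l)) ∧
  (∀ x : K, x ≠ ⊤ → (¬ ∃ y, x ⋖ y) → ∃ l, Filter.Tendsto G (nhdsWithin x (Set.Ioi x)) (nhds l))

open Classical in
/-- `L_G(x)`: `0` at the least element, `G` of the immediate predecessor if `x` is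
left-isolated, and the left limit of `G` at `x` if `x` is left-dense. -/
noncomputable def Lfun {K : Type*} [LinearOrder K] [TopologicalSpace K] [BoundedOrder K]
    (G : K → ℝ) (x : K) : ℝ :=
  if x = ⊥ then 0
  else if h : ∃ y, y ⋖ x then G h.choose
  else Function.leftLim G x

/-- The set of variation sums of `G` over divisions of `[a,b]`. -/
def varSums {K : Type*} [LinearOrder K] (G : K → ℝ) (a b : K) : Set ℝ :=
  {v | ∃ (n : ℕ) (x : ℕ → K), x 0 = a ∧ x n = b ∧ (∀ i < n, x i ≤ x (i + 1)) ∧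
        v = ∑ i ∈ Finset.range n, |G (x (i + 1)) - G (x i)|}

/-- `S` is null for the outer measure induced by `μ` via covers by countably many
open intervals. -/
def GNull {K : Type*} [LinearOrder K] [TopologicalSpace K] [MeasurableSpace K]
    (μ : MeasureTheory.Measure K) (S : Set K) : Prop :=
  ∀ ε : ℝ, 0 < ε → ∃ I : ℕ → Set K, (∀ n, IsOpen (I n) ∧ (I n).OrdConnected) ∧
    S ⊆ ⋃ n, I n ∧ ∑' n, μ (I n) < ENNReal.ofReal ε

open Topology

lemma extend_partition {K : Type*} [LinearOrder K] (δ : K → Set K) {b0 a d : K} (had : a ≤ d)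
    (t0 : K) (ht : t0 ∈ Set.Icc a d) (hsub : Set.Ioc a d ⊆ δ t0)
    (P : TaggedPartition K b0 a) (hP : P.IsFine δ) :
    ∃ Q : TaggedPartition K b0 d, Q.IsFine δ := by
  refine ⟨⟨P.n + 1, fun i => if i ≤ P.n then P.x i else d,
    fun i => if i ≤ P.n then P.t i else t0, ?_, ?_, ?_, ?_⟩, ?_⟩
  · simp [P.x_zero]
  · simp
  · intro i hi
    rcases lt_or_eq_of_le (Nat.lt_succ_iff.mp hi) with h | h
    · simp only [le_of_lt h, Nat.succ_le_of_lt h, if_pos]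
      exact P.mono i h
    · subst h; simpa [P.x_last] using had
  · intro i hi
    rcases lt_or_eq_of_le (Nat.lt_succ_iff.mp hi) with h | h
    · simp only [le_of_lt h, Nat.succ_le_of_lt h, if_pos]
      exact P.tag_mem i h
    · subst h; simpa [P.x_last] using ht
  · intro i hi
    rcases lt_or_eq_of_le (Nat.lt_succ_iff.mp hi) with h | h
    · simp only [le_of_lt h, Nat.succ_le_of_lt h, if_pos]
      exact hP i h
    · subst h; simpa [P.x_last] using hsub

theorem cousin_lemma {K : Type*} [LinearOrder K] [TopologicalSpace K] [OrderTopology K]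
    [CompactSpace K] [BoundedOrder K] (δ : K → Set K) (hδ : IsGauge K ⊥ ⊤ δ) :
    ∃ P : TaggedPartition K (⊥ : K) (⊤ : K), P.IsFine δ := by
  have hmem : ∀ x : K, x ∈ Set.Icc (⊥:K) ⊤ := fun x => ⟨bot_le, le_top⟩
  have hopen : ∀ x : K, δ x ∈ 𝓝 x := by
    intro x
    obtain ⟨hx, -, U, hU, hUe⟩ := hδ x (hmem x)
    rw [hUe, Set.Icc_bot_top, Set.inter_univ] at hx ⊢
    exact hU.mem_nhds hx
  have hself : ∀ x : K, x ∈ δ x := fun x => (hδ x (hmem x)).1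
  set S : Set K := {b | ∃ P : TaggedPartition K (⊥ : K) b, P.IsFine δ} with hS
  have hbot : (⊥ : K) ∈ S :=
    ⟨⟨0, fun _ => ⊥, fun _ => ⊥, rfl, rfl, fun i hi => absurd hi (Nat.not_lt_zero i),
      fun i hi => absurd hi (Nat.not_lt_zero i)⟩, fun i hi => absurd hi (Nat.not_lt_zero i)⟩
  have hTne : (upperBounds S).Nonempty := ⟨⊤, fun x _ => le_top⟩
  have hTcl : IsClosed (upperBounds S) := by
    have he : upperBounds S = ⋂ x ∈ S, Set.Ici x := by
      ext y; simp [upperBounds, Set.mem_iInter]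
    rw [he]
    exact isClosed_biInter fun x _ => isClosed_Ici
  obtain ⟨c, hcT, hclb⟩ := (hTcl.isCompact).exists_isLeast hTne
  -- Step 1 : c ∈ S
  have hcS : c ∈ S := by
    rcases eq_or_ne c ⊥ with rfl | hne
    · exact hbot
    · obtain ⟨l, hl, hlsub⟩ := exists_Ioc_subset_of_mem_nhds (hopen c) ⟨⊥, hne.bot_lt⟩
      have hlnub : l ∉ upperBounds S := fun h => absurd (hclb h) (not_le_of_gt hl)
      obtain ⟨s, hsS, hls⟩ : ∃ s ∈ S, l < s := by
        by_contra h
        push_neg at h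
        exact hlnub fun x hx => le_of_not_gt fun hc => absurd (h x hx) (not_le_of_gt hc)
      have hsc : s ≤ c := hcT hsS
      obtain ⟨P, hP⟩ := hsS
      exact extend_partition δ hsc c ⟨hsc, le_refl c⟩
        (fun x hx => hlsub ⟨hls.trans hx.1, hx.2⟩) P hP
  -- Step 2 : c = ⊤
  rcases eq_or_ne c ⊤ with rfl | hct
  · exact hcS
  · exfalso
    by_cases hsucc : ∃ c', c ⋖ c'
    · obtain ⟨c', hcov⟩ := hsucc
      obtain ⟨P, hP⟩ := hcS
      have hsub : Set.Ioc c c' ⊆ δ c' := by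
        intro x hx
        have : x = c' := le_antisymm hx.2 (hcov.2 hx.1 |> fun h => le_of_not_gt h)
        rw [this]; exact hself c'
      obtain ⟨Q, hQ⟩ := extend_partition δ hcov.1.le c' ⟨hcov.1.le, le_refl c'⟩ hsub P hP
      exact absurd (hcT ⟨Q, hQ⟩) (not_le_of_gt hcov.1)
    · obtain ⟨u, hu, husub⟩ := exists_Ico_subset_of_mem_nhds (hopen c) ⟨⊤, hct.lt_top⟩
      obtain ⟨d, hcd, hdu⟩ : ∃ d, c < d ∧ d < u := by
        by_contra h
        push_neg at h
        exact hsucc ⟨u, hu, fun x hx => not_lt_of_ge (h x hx)⟩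
      obtain ⟨P, hP⟩ := hcS
      have hsub : Set.Ioc c d ⊆ δ c := fun x hx => husub ⟨hx.1.le, lt_of_le_of_lt hx.2 hdu⟩
      obtain ⟨Q, hQ⟩ := extend_partition δ hcd.le c ⟨le_refl c, hcd.le⟩ hsub P hP
      exact absurd (hcT ⟨Q, hQ⟩) (not_le_of_gt hcd)
end

section
/- Bolzano–Cauchy criterion: a function f : K → ℝ on a compact line K is Kurzweil–Stieltjes integrable with respect to G : K → ℝ if and only if for every ε > 0 there exists a gauge δ on K such that |S(f,G,P) − S(f,G,Q)| < ε for every pair of δ-fine tagged partitions P and Q of K. -/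
open Set Filter MeasureTheory

private lemma isGauge_inter {K : Type*} [LinearOrder K] [TopologicalSpace K] {a b : K}
    {δ₁ δ₂ : K → Set K} (h₁ : IsGauge K a b δ₁) (h₂ : IsGauge K a b δ₂) :
    IsGauge K a b (fun x => δ₁ x ∩ δ₂ x) := by
  intro x hx
  obtain ⟨m1, o1, U1, hU1, e1⟩ := h₁ x hx
  obtain ⟨m2, o2, U2, hU2, e2⟩ := h₂ x hx
  refine ⟨⟨m1, m2⟩, o1.inter o2, U1 ∩ U2, hU1.inter hU2, ?_⟩
  simp only [e1, e2]
  ext y; simp only [Set.mem_inter_iff]; tauto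

private lemma isFine_mono {K : Type*} [LinearOrder K] {a b : K}
    {δ₁ δ₂ : K → Set K} (hsub : ∀ x, δ₁ x ⊆ δ₂ x) {P : TaggedPartition K a b}
    (hP : P.IsFine δ₁) : P.IsFine δ₂ :=
  fun i hi => (hP i hi).trans (hsub _)

theorem bolzano_cauchy_criterion {K : Type*} [LinearOrder K] [TopologicalSpace K]
    [OrderTopology K] [CompactSpace K] [BoundedOrder K] (f G : K → ℝ) :
    (∃ A, HasIntegral f G (⊥ : K) ⊤ A) ↔
      ∀ ε : ℝ, 0 < ε → ∃ δ : K → Set K, IsGauge K ⊥ ⊤ δ ∧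
        ∀ P Q : TaggedPartition K (⊥ : K) (⊤ : K), P.IsFine δ → Q.IsFine δ →
          |riemannSum f G P - riemannSum f G Q| < ε := by
  constructor
  · rintro ⟨A, hA⟩ ε hε
    obtain ⟨δ, hδ, hclose⟩ := hA (ε / 2) (by linarith)
    refine ⟨δ, hδ, fun P Q hP hQ => ?_⟩
    have h1 := hclose P hP
    have h2 := hclose Q hQ
    have h3 : |riemannSum f G P - riemannSum f G Q| ≤
        |riemannSum f G P - A| + |A - riemannSum f G Q| := abs_sub_le _ _ _
    rw [abs_sub_comm A] at h3
    linarith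
  · intro h
    choose δ hg hcau using fun n : ℕ => h (1 / (n + 1)) (by positivity)
    -- cumulative intersections of the gauges
    let η : ℕ → K → Set K := fun n => Nat.rec (δ 0) (fun n ηn x => ηn x ∩ δ (n + 1) x) n
    have hηg : ∀ n, IsGauge K (⊥ : K) ⊤ (η n) := by
      intro n
      induction n with
      | zero => exact hg 0
      | succ n ih => exact isGauge_inter ih (hg (n + 1))
    have hηsub : ∀ n k, k ≤ n → ∀ x, η n x ⊆ δ k x := by
      intro n
      induction n with
      | zero => intro k hk x; interval_cases k; exact subset_rfl
      | succ n ih =>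
        intro k hk x
        rcases Nat.lt_succ_iff_lt_or_eq.mp (Nat.lt_succ_of_le hk) with h' | h'
        · exact (Set.inter_subset_left).trans (ih k (Nat.lt_succ_iff.mp h') x)
        · subst h'; exact Set.inter_subset_right
    by_cases hne : ∀ n, ∃ P : TaggedPartition K (⊥ : K) ⊤, P.IsFine (η n)
    · choose P hP using hne
      set s : ℕ → ℝ := fun n => riemannSum f G (P n) with hs
      have key : ∀ N m n, N ≤ m → N ≤ n → |s m - s n| < 1 / (N + 1) := by
        intro N m n hm hn
        exact hcau N _ _ (isFine_mono (hηsub m N hm) (hP m))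
          (isFine_mono (hηsub n N hn) (hP n))
      have hC : CauchySeq s := by
        rw [Metric.cauchySeq_iff']
        intro ε hε
        obtain ⟨N, hN⟩ := exists_nat_one_div_lt hε
        refine ⟨N, fun n hn => ?_⟩
        calc dist (s n) (s N) = |s n - s N| := Real.dist_eq _ _
          _ < 1 / (N + 1) := key N n N hn le_rfl
          _ < ε := hN
      obtain ⟨A, hA⟩ := cauchySeq_tendsto_of_complete hC
      refine ⟨A, fun ε hε => ?_⟩
      obtain ⟨N, hN⟩ := exists_nat_one_div_lt (half_pos hε)
      refine ⟨δ N, hg N, fun Q hQ => ?_⟩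
      have hle : |riemannSum f G Q - A| ≤ 1 / (N + 1) := by
        have ht : Tendsto (fun n => |riemannSum f G Q - s n|) atTop
            (nhds |riemannSum f G Q - A|) := (tendsto_const_nhds.sub hA).abs
        refine le_of_tendsto ht (Filter.eventually_atTop.2 ⟨N, fun n hn => ?_⟩)
        exact le_of_lt (hcau N _ _ hQ (isFine_mono (hηsub n N hn) (hP n)))
      calc |riemannSum f G Q - A| ≤ 1 / (N + 1) := hle
        _ < ε / 2 := hN
        _ < ε := by linarith
    · push_neg at hne
      obtain ⟨n, hn⟩ := hne
      exact ⟨0, fun ε hε => ⟨η n, hηg n, fun P hP => absurd hP (hn P)⟩⟩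
end

section
/- On a compact line K contained in the setting of Lemma 3.9: for every continuous f : K → ℝ and every ε > 0, there exists a finite division 0_K = z_0 ≤ z_1 ≤ ... ≤ z_n = 1_K of K such that for each i, either z_i has an immediate predecessor (is left-isolated), or |f(x) − f(y)| < ε for all x, y ∈ [z_{i-1}, z_i]. -/
open Set Filter MeasureTheory

/-- Extend a good division of `[⊥, b]` to one of `[⊥, c]`. -/
lemma goodDiv_extend {K : Type*} [LinearOrder K] [OrderBot K] (f : K → ℝ) (ε : ℝ)
    {b c : K} (hbc : b ≤ c)
    (hb : ∃ (n : ℕ) (z : ℕ → K), z 0 = ⊥ ∧ z n = b ∧ (∀ i < n, z i ≤ z (i + 1)) ∧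
      ∀ i < n, (∃ y, y ⋖ z (i + 1)) ∨
        ∀ x ∈ Set.Icc (z i) (z (i + 1)), ∀ y ∈ Set.Icc (z i) (z (i + 1)), |f x - f y| < ε)
    (hc : (∃ y, y ⋖ c) ∨
        ∀ x ∈ Set.Icc b c, ∀ y ∈ Set.Icc b c, |f x - f y| < ε) :
    ∃ (n : ℕ) (z : ℕ → K), z 0 = ⊥ ∧ z n = c ∧ (∀ i < n, z i ≤ z (i + 1)) ∧
      ∀ i < n, (∃ y, y ⋖ z (i + 1)) ∨
        ∀ x ∈ Set.Icc (z i) (z (i + 1)), ∀ y ∈ Set.Icc (z i) (z (i + 1)), |f x - f y| < ε := by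
  obtain ⟨n, z, h0, hn, hm, hp⟩ := hb
  refine ⟨n + 1, fun i => if i ≤ n then z i else c, by simp [h0], by simp, ?_, ?_⟩
  · intro i hi
    rcases lt_or_eq_of_le (Nat.lt_succ_iff.mp hi) with h | h
    · simpa [Nat.le_of_lt h, Nat.succ_le_of_lt h] using hm i h
    · subst h; simpa [hn] using hbc
  · intro i hi
    rcases lt_or_eq_of_le (Nat.lt_succ_iff.mp hi) with h | h
    · simpa [Nat.le_of_lt h, Nat.succ_le_of_lt h] using hp i h
    · subst h; simpa [hn] using hc

theorem division_small_oscillation {K : Type*} [LinearOrder K] [TopologicalSpace K]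
    [OrderTopology K] [CompactSpace K] [BoundedOrder K] (f : K → ℝ) (hf : Continuous f)
    (ε : ℝ) (hε : 0 < ε) :
    ∃ (n : ℕ) (z : ℕ → K), z 0 = ⊥ ∧ z n = ⊤ ∧ (∀ i < n, z i ≤ z (i + 1)) ∧
      ∀ i < n, (∃ y, y ⋖ z (i + 1)) ∨
        ∀ x ∈ Set.Icc (z i) (z (i + 1)), ∀ y ∈ Set.Icc (z i) (z (i + 1)),
          |f x - f y| < ε := by 
  classical
  set S : Set K := {b | ∃ (n : ℕ) (z : ℕ → K), z 0 = ⊥ ∧ z n = b ∧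
      (∀ i < n, z i ≤ z (i + 1)) ∧
      ∀ i < n, (∃ y, y ⋖ z (i + 1)) ∨
        ∀ x ∈ Set.Icc (z i) (z (i + 1)), ∀ y ∈ Set.Icc (z i) (z (i + 1)),
          |f x - f y| < ε} with hS
  have hbot : (⊥ : K) ∈ S := ⟨0, fun _ => ⊥, rfl, rfl, by simp, by simp⟩
  -- the closure of S is compact and nonempty, take its greatest element s
  obtain ⟨s, hscl, hsub⟩ := (isClosed_closure.isCompact (s := closure S)).exists_isGreatest
    ⟨⊥, subset_closure hbot⟩
  have hub : ∀ b ∈ S, b ≤ s := fun b hb => hsub (subset_closure hb)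
  have hlub : ∀ u, (∀ b ∈ S, b ≤ u) → s ≤ u := by
    intro u hu
    have : closure S ⊆ Set.Iic u := closure_minimal hu isClosed_Iic
    exact this hscl
  -- s ∈ S
  have hsS : s ∈ S := by
    by_cases hiso : ∃ y, y ⋖ s
    · exact goodDiv_extend f ε bot_le hbot (Or.inl hiso)
    · by_cases hsbot : s = ⊥
      · exact hsbot ▸ hbot
      · have hnhds : {x | |f x - f s| < ε / 2} ∈ nhds s :=
          (isOpen_lt (hf.sub continuous_const).abs continuous_const).mem_nhds
            (by simpa using half_pos hε)
        obtain ⟨c, hcs, hsub2⟩ := exists_Ioc_subset_of_mem_nhds hnhds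
          ⟨⊥, (Ne.bot_lt hsbot)⟩
        -- find b ∈ S with c < b
        have : (S ∩ Set.Ioi c).Nonempty := by
          by_contra hemp
          have hub' : ∀ b ∈ S, b ≤ c := by
            intro b hb
            by_contra hbc
            exact hemp ⟨b, hb, lt_of_not_ge hbc⟩
          exact absurd (hlub c hub') (not_le.mpr hcs)
        obtain ⟨b, hbS, hcb⟩ := this
        refine goodDiv_extend f ε (hub b hbS) hbS (Or.inr ?_)
        intro x hx y hy
        have hxs : |f x - f s| < ε / 2 := hsub2 ⟨lt_of_lt_of_le hcb hx.1, hx.2⟩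
        have hys : |f y - f s| < ε / 2 := hsub2 ⟨lt_of_lt_of_le hcb hy.1, hy.2⟩
        calc |f x - f y| ≤ |f x - f s| + |f s - f y| := abs_sub_le _ _ _
          _ < ε := by have := abs_sub_comm (f s) (f y); linarith
  -- s = ⊤
  have hstop : s = ⊤ := by
    by_contra hs
    have hslt : s < ⊤ := lt_top_iff_ne_top.mpr hs
    by_cases hsucc : ∃ t, s ⋖ t
    · obtain ⟨t, hst⟩ := hsucc
      have htS : t ∈ S := goodDiv_extend f ε hst.le hsS (Or.inl ⟨s, hst⟩)
      exact absurd (hub t htS) (not_le.mpr hst.lt)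
    · have hnhds : {x | |f x - f s| < ε / 2} ∈ nhds s :=
        (isOpen_lt (hf.sub continuous_const).abs continuous_const).mem_nhds
          (by simpa using half_pos hε)
      obtain ⟨u, hsu, hsub2⟩ := exists_Ico_subset_of_mem_nhds hnhds ⟨⊤, hslt⟩
      have hncov : ¬ s ⋖ u := fun h => hsucc ⟨u, h⟩
      obtain ⟨t, hst, htu⟩ := (not_covBy_iff hsu).mp hncov
      have htS : t ∈ S := by
        refine goodDiv_extend f ε hst.le hsS (Or.inr ?_)
        intro x hx y hy
        have hxs : |f x - f s| < ε / 2 := hsub2 ⟨hx.1, lt_of_le_of_lt hx.2 htu⟩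
        have hys : |f y - f s| < ε / 2 := hsub2 ⟨hy.1, lt_of_le_of_lt hy.2 htu⟩
        calc |f x - f y| ≤ |f x - f s| + |f s - f y| := abs_sub_le _ _ _
          _ < ε := by have := abs_sub_comm (f s) (f y); linarith
      exact absurd (hub t htS) (not_le.mpr hst)
  exact hstop ▸ hsS
end

section
/- If K is a compact line and G : K → ℝ has bounded variation, then every continuous function f : K → ℝ is G-integrable, and |∫_K f dG| ≤ |f(0_K)G(0_K)| + (sup_{x∈K} |f(x)|)·Var(G,K). -/
open Set Filter MeasureTheory

lemma exists_ordConnected_open_nhd {K : Type*} [LinearOrder K] [TopologicalSpace K]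
    [OrderTopology K] {V : Set K} (hV : IsOpen V) {x : K} (hx : x ∈ V) :
    ∃ W : Set K, IsOpen W ∧ W.OrdConnected ∧ x ∈ W ∧ W ⊆ V := by
  have hb := TopologicalSpace.isTopologicalBasis_of_subbasis
    (OrderTopology.topology_eq_generate_intervals (α := K))
  obtain ⟨W, hWb, hxW, hWV⟩ := hb.exists_subset_of_mem_open hx hV
  obtain ⟨F, ⟨hFfin, hFsub⟩, rfl⟩ := hWb
  refine ⟨⋂₀ F, ?_, ?_, hxW, hWV⟩
  · exact hFfin.isOpen_sInter (fun s hs => by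
      obtain ⟨a, h | h⟩ := hFsub hs
      · rw [h]; exact isOpen_Ioi
      · rw [h]; exact isOpen_Iio)
  · exact ordConnected_sInter (fun s hs => by
      obtain ⟨a, h | h⟩ := hFsub hs
      · rw [h]; exact ordConnected_Ioi
      · rw [h]; exact ordConnected_Iio)

/-- The canonical gauge from `f` and `ε`. -/
def gaugeOf {K : Type*} [LinearOrder K] (f : K → ℝ) (ε : ℝ) (t : K) : Set K :=
  {x | Set.uIcc t x ⊆ f ⁻¹' (Metric.ball (f t) ε)}

lemma gaugeOf_isOpen {K : Type*} [LinearOrder K] [TopologicalSpace K] [OrderTopology K]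
    {f : K → ℝ} (hf : Continuous f) {ε : ℝ} (hε : 0 < ε) (t : K) :
    IsOpen (gaugeOf f ε t) := by
  rw [isOpen_iff_forall_mem_open]
  intro x hx
  have hVopen : IsOpen (f ⁻¹' (Metric.ball (f t) ε)) := (Metric.isOpen_ball).preimage hf
  have hxV : x ∈ f ⁻¹' (Metric.ball (f t) ε) := hx (Set.right_mem_uIcc)
  obtain ⟨W, hWo, hWoc, hxW, hWV⟩ := exists_ordConnected_open_nhd hVopen hxV
  refine ⟨W, fun y hy => ?_, hWo, hxW⟩
  intro z hz
  rcases Set.uIcc_subset_uIcc_union_uIcc (b := x) hz with h | h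
  · exact hx h
  · exact hWV (hWoc.uIcc_subset hxW hy h)

lemma self_mem_gaugeOf {K : Type*} [LinearOrder K] {f : K → ℝ} {ε : ℝ} (hε : 0 < ε) (t : K) :
    t ∈ gaugeOf f ε t := by
  intro z hz
  rw [Set.uIcc_self] at hz
  simp only [Set.mem_singleton_iff] at hz
  subst hz
  simpa using hε

lemma gaugeOf_ordConnected {K : Type*} [LinearOrder K] (f : K → ℝ) (ε : ℝ) (t : K) :
    (gaugeOf f ε t).OrdConnected := by
  constructor
  intro a ha b hb z hz
  intro w hw
  rcases Set.uIcc_subset_uIcc_union_uIcc (b := a) hw with h | h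
  · exact ha h
  · have : Set.uIcc a z ⊆ Set.uIcc a b := Set.uIcc_subset_uIcc (Set.left_mem_uIcc)
      (Set.mem_uIcc.2 (Or.inl hz))
    have h2 : Set.uIcc a b ⊆ f ⁻¹' (Metric.ball (f t) ε) := by
      intro w hw2
      rcases Set.uIcc_subset_uIcc_union_uIcc (b := t) hw2 with h3 | h3
      · exact ha (Set.uIcc_comm a t ▸ h3)
      · exact hb h3
    exact h2 (this h)

lemma gaugeOf_isGauge {K : Type*} [LinearOrder K] [TopologicalSpace K] [OrderTopology K]
    [BoundedOrder K] {f : K → ℝ} (hf : Continuous f) {ε : ℝ} (hε : 0 < ε) :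
    IsGauge K (⊥ : K) ⊤ (gaugeOf f ε) := by
  intro x _
  refine ⟨self_mem_gaugeOf hε x, gaugeOf_ordConnected f ε x, gaugeOf f ε x,
    gaugeOf_isOpen hf hε x, ?_⟩
  rw [Set.Icc_bot_top, Set.inter_univ]

lemma gaugeOf_mono {K : Type*} [LinearOrder K] (f : K → ℝ) {ε ε' : ℝ} (h : ε ≤ ε') (t : K) :
    gaugeOf f ε t ⊆ gaugeOf f ε' t := by
  intro x hx z hz
  exact Metric.ball_subset_ball h (hx hz)

lemma abs_lt_of_mem_gaugeOf {K : Type*} [LinearOrder K] {f : K → ℝ} {ε : ℝ} {t x : K}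
    (h : x ∈ gaugeOf f ε t) : |f x - f t| < ε := by
  have := h (Set.right_mem_uIcc)
  simpa [Real.dist_eq] using this

/-- Extend a fine tagged partition of `[a,b]` to one of `[a,c]`. -/
def TaggedPartition.extend {K : Type*} [LinearOrder K] {a b : K}
    (P : TaggedPartition K a b) (c τ : K) (hbc : b ≤ c) (hτ : τ ∈ Set.Icc b c) :
    TaggedPartition K a c where
  n := P.n + 1
  x := fun i => if i ≤ P.n then P.x i else c
  t := fun i => if i ≤ P.n then P.t i else τ
  x_zero := by simp [P.x_zero]
  x_last := by simp
  mono := by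
    intro i hi
    rcases lt_or_eq_of_le (Nat.lt_succ_iff.1 hi) with h | h
    · simp only [le_of_lt h, Nat.succ_le_of_lt h, if_pos]
      exact P.mono i h
    · subst h
      simp [P.x_last, hbc]
  tag_mem := by
    intro i hi
    rcases lt_or_eq_of_le (Nat.lt_succ_iff.1 hi) with h | h
    · simp only [le_of_lt h, Nat.succ_le_of_lt h, if_pos]
      exact P.tag_mem i h
    · subst h
      simp [P.x_last]
      exact hτ

lemma TaggedPartition.extend_isFine {K : Type*} [LinearOrder K] {a b : K}
    {P : TaggedPartition K a b} {δ : K → Set K} (hP : P.IsFine δ) {c τ : K}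
    (hbc : b ≤ c) (hτ : τ ∈ Set.Icc b c) (hδ : Set.Ioc b c ⊆ δ τ) :
    (P.extend c τ hbc hτ).IsFine δ := by
  intro i hi
  rcases lt_or_eq_of_le (Nat.lt_succ_iff.1 hi) with h | h
  · simpa only [TaggedPartition.extend, le_of_lt h, Nat.succ_le_of_lt h, if_pos]
      using hP i h
  · subst h
    simp only [TaggedPartition.extend]
    rw [if_pos le_rfl, if_neg (Nat.not_succ_le_self _), if_neg (Nat.not_succ_le_self _),
      P.x_last]
    exact hδ

/-- The trivial partition of `[a,a]`. -/
def TaggedPartition.trivial (K : Type*) [LinearOrder K] (a : K) : TaggedPartition K a a where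
  n := 0
  x := fun _ => a
  t := fun _ => a
  x_zero := rfl
  x_last := rfl
  mono := by intro i hi; omega
  tag_mem := by intro i hi; omega

/-- Cousin's lemma. -/
lemma exists_fine_partition {K : Type*} [LinearOrder K] [TopologicalSpace K] [OrderTopology K]
    [CompactSpace K] [BoundedOrder K] {δ : K → Set K} (hδ : IsGauge K (⊥ : K) ⊤ δ) :
    ∃ P : TaggedPartition K ⊥ ⊤, P.IsFine δ := by
  set T : Set K := {b | ∃ P : TaggedPartition K ⊥ b, P.IsFine δ} with hT
  have hbotT : (⊥ : K) ∈ T := ⟨TaggedPartition.trivial K ⊥, fun i hi => absurd hi (Nat.not_lt_zero i)⟩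
  have hTne : T.Nonempty := ⟨⊥, hbotT⟩
  -- get lub of T
  obtain ⟨c', hc'mem, hc'⟩ := (isClosed_closure.isCompact).exists_isLUB
    (hTne.mono subset_closure)
  have hc : IsLUB T c' := by
    constructor
    · exact (upperBounds_closure T ▸ hc'.1 : c' ∈ upperBounds T)
    · intro u hu
      exact hc'.2 (by rw [upperBounds_closure]; exact hu)
  set c := c' with hcdef
  obtain ⟨hcδ, hcoc, U, hUo, hUeq⟩ := hδ c ⟨bot_le, le_top⟩
  have hδcU : δ c = U := by rw [hUeq, Set.Icc_bot_top, Set.inter_univ]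
  -- Step 1 : c ∈ T
  have hcT : c ∈ T := by
    by_cases h : c ∈ T
    · exact h
    have hcbot : c ≠ ⊥ := fun h' => h (h' ▸ hbotT)
    by_cases hpred : ∃ p, p ⋖ c
    · obtain ⟨p, hp⟩ := hpred
      obtain ⟨b, hbT, hpb⟩ : ∃ b ∈ T, p < b := by
        by_contra hcon
        push_neg at hcon
        exact absurd (hc.2 fun y hy => hcon y hy) (not_le.2 hp.1)
      have hbc : b ≤ c := hc.1 hbT
      have hbceq : b = c := hbc.eq_of_not_lt (hp.2 hpb)
      exact absurd (hbceq ▸ hbT) h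
    · -- left-dense case
      push_neg at hpred
      have hUnhds : U ∈ nhds c := hUo.mem_nhds (hδcU ▸ hcδ)
      obtain ⟨a, hac, haU⟩ := exists_Ioc_subset_of_mem_nhds hUnhds
        ⟨⊥, hcbot.symm.lt_of_le bot_le⟩
      obtain ⟨b, hbT, hab⟩ : ∃ b ∈ T, a < b := by
        by_contra hcon
        push_neg at hcon
        exact absurd (hc.2 fun y hy => (hcon y hy)) (not_le.2 hac)
      have hbc : b ≤ c := hc.1 hbT
      have hbc' : b < c := lt_of_le_of_ne hbc (fun h2 => h (h2 ▸ hbT))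
      have hbδ : b ∈ δ c := hδcU ▸ haU ⟨hab, hbc⟩
      obtain ⟨P, hP⟩ := hbT
      exact ⟨P.extend c c hbc ⟨hbc, le_refl c⟩,
        P.extend_isFine hP hbc ⟨hbc, le_refl c⟩
          (fun y hy => hcoc.out hbδ hcδ ⟨hy.1.le, hy.2⟩)⟩
  -- Step 2 : c = ⊤
  rcases eq_or_lt_of_le (le_top : c ≤ ⊤) with htop | htop
  · exact htop ▸ hcT
  exfalso
  by_cases hsucc : ∃ s, c ⋖ s
  · obtain ⟨s, hs⟩ := hsucc
    obtain ⟨hsδ, _, _⟩ := hδ s ⟨bot_le, le_top⟩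
    obtain ⟨P, hP⟩ := hcT
    have hsT : s ∈ T := ⟨P.extend s s hs.1.le ⟨hs.1.le, le_refl s⟩,
      P.extend_isFine hP hs.1.le ⟨hs.1.le, le_refl s⟩
        (fun y hy => by
          have : y = s := hy.2.eq_of_not_lt (hs.2 hy.1)
          exact this ▸ hsδ)⟩
    exact absurd (hc.1 hsT) (not_le.2 hs.1)
  · push_neg at hsucc
    have hUnhds : U ∈ nhds c := hUo.mem_nhds (hδcU ▸ hcδ)
    obtain ⟨u, hcu, huU⟩ := exists_Ico_subset_of_mem_nhds hUnhds ⟨⊤, htop⟩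
    obtain ⟨d, hcd, hdu⟩ : ∃ d, c < d ∧ d < u :=
      (not_covBy_iff hcu).1 (hsucc u)
    have hdδ : d ∈ δ c := hδcU ▸ huU ⟨hcd.le, hdu⟩
    obtain ⟨P, hP⟩ := hcT
    have hdT : d ∈ T := ⟨P.extend d c hcd.le ⟨le_refl c, hcd.le⟩,
      P.extend_isFine hP hcd.le ⟨le_refl c, hcd.le⟩
        (fun y hy => hcoc.out hcδ hdδ ⟨hy.1.le, hy.2⟩)⟩
    exact absurd (hc.1 hdT) (not_le.2 hcd)

section Merge
variable {K : Type*} [LinearOrder K] [BoundedOrder K]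

/-- Monotone enumeration of a finset, padded with `⊤`. -/
noncomputable def zfun (F : Finset K) (j : ℕ) : K :=
  if h : j < F.card then (F.orderIsoOfFin rfl ⟨j, h⟩ : K) else ⊤

lemma zfun_lt {F : Finset K} {j j' : ℕ} (h : j < j') (h' : j' < F.card) :
    zfun F j < zfun F j' := by
  have hj : j < F.card := h.trans h'
  simp only [zfun, dif_pos hj, dif_pos h']
  exact_mod_cast (F.orderIsoOfFin rfl).strictMono (show (⟨j, hj⟩ : Fin F.card) < ⟨j', h'⟩ from h)

lemma zfun_mono (F : Finset K) : Monotone (zfun F) := by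
  intro j j' hjj
  rcases eq_or_lt_of_le hjj with rfl | hlt
  · exact le_refl _
  by_cases h' : j' < F.card
  · exact (zfun_lt hlt h').le
  · simp only [zfun, dif_neg h']
    exact le_top

lemma lt_of_zfun_lt {F : Finset K} {j j' : ℕ} (h : zfun F j < zfun F j') : j < j' := by
  by_contra hc
  exact absurd (zfun_mono F (not_lt.1 hc)) (not_le.2 h)

lemma zfun_mem {F : Finset K} {j : ℕ} (h : j < F.card) : zfun F j ∈ F := by
  simp only [zfun, dif_pos h]
  exact (F.orderIsoOfFin rfl ⟨j, h⟩).2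

/-- Position of a member of `F` in the monotone enumeration. -/
noncomputable def posOf {F : Finset K} {x : K} (hx : x ∈ F) : ℕ :=
  ((F.orderIsoOfFin rfl).symm ⟨x, hx⟩ : Fin F.card)

lemma posOf_lt {F : Finset K} {x : K} (hx : x ∈ F) : posOf hx < F.card :=
  ((F.orderIsoOfFin rfl).symm ⟨x, hx⟩).isLt

lemma zfun_posOf {F : Finset K} {x : K} (hx : x ∈ F) : zfun F (posOf hx) = x := by
  have he : (⟨posOf hx, posOf_lt hx⟩ : Fin F.card) = (F.orderIsoOfFin rfl).symm ⟨x, hx⟩ :=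
    Fin.ext rfl
  rw [zfun, dif_pos (posOf_lt hx), he]
  exact congrArg Subtype.val ((F.orderIsoOfFin rfl).apply_symm_apply ⟨x, hx⟩)

lemma zfun_zero {F : Finset K} (h : (⊥ : K) ∈ F) : zfun F 0 = ⊥ := by
  have h0 : 0 < F.card := Finset.card_pos.2 ⟨⊥, h⟩
  refine le_antisymm ?_ bot_le
  have := zfun_mono F (Nat.zero_le (posOf h))
  rw [zfun_posOf h] at this
  exact this

lemma zfun_last {F : Finset K} (h : (⊤ : K) ∈ F) : zfun F (F.card - 1) = ⊤ := by
  refine le_antisymm le_top ?_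
  have hle : posOf h ≤ F.card - 1 := Nat.le_sub_one_of_lt (posOf_lt h)
  have := zfun_mono F hle
  rw [zfun_posOf h] at this
  exact this

/-- Telescoping over an `Ico`. -/
lemma sum_Ico_telescope (g : ℕ → ℝ) {a b : ℕ} (h : a ≤ b) :
    ∑ j ∈ Finset.Ico a b, (g (j + 1) - g j) = g b - g a := by
  rw [Finset.sum_Ico_eq_sum_range]
  have := Finset.sum_range_sub (fun k => g (a + k)) (b - a)
  calc ∑ k ∈ Finset.range (b - a), (g (a + k + 1) - g (a + k))
      = ∑ k ∈ Finset.range (b - a), ((fun k => g (a + k)) (k + 1) - (fun k => g (a + k)) k) := by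
        apply Finset.sum_congr rfl; intro k _; simp [Nat.add_assoc]
    _ = g (a + (b - a)) - g (a + 0) := by rw [this]
    _ = g b - g a := by rw [Nat.add_sub_cancel' h, Nat.add_zero]

lemma sum_Ico_partition (p : ℕ → ℕ) (hp : ∀ i, p i ≤ p (i + 1)) (h : ℕ → ℝ) (n : ℕ) :
    ∑ i ∈ Finset.range n, ∑ j ∈ Finset.Ico (p i) (p (i + 1)), h j
      = ∑ j ∈ Finset.Ico (p 0) (p n), h j := by
  induction n with
  | zero => simp
  | succ n ih =>
    rw [Finset.sum_range_succ, ih,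
      Finset.sum_Ico_consecutive _ ((monotone_nat_of_le_succ hp) (Nat.zero_le n)) (hp n)]

variable (P : TaggedPartition K ⊥ ⊤) (F : Finset K) (hF : ∀ i, i ≤ P.n → P.x i ∈ F)

lemma TaggedPartition.x_mono : ∀ {i j}, i ≤ j → j ≤ P.n → P.x i ≤ P.x j := by
  intro i j hij hj
  induction j with
  | zero => simp_all
  | succ j ih =>
    rcases Nat.lt_succ_iff_lt_or_eq.1 (Nat.lt_succ_of_le hij) with h | h
    · exact (ih (Nat.lt_succ_iff.1 (Nat.succ_le_of_lt h)) (Nat.le_of_succ_le hj)).trans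
        (P.mono j (Nat.lt_of_succ_le hj))
    · exact h ▸ le_refl _

/-- The index of the `P`-interval containing `(z_j, z_{j+1}]`. -/
noncomputable def sIdx (j : ℕ) : ℕ :=
  Nat.findGreatest (fun i => P.x i ≤ zfun F j) P.n

lemma sIdx_le (j : ℕ) : sIdx P F j ≤ P.n := Nat.findGreatest_le _

lemma sIdx_spec (j : ℕ) : P.x (sIdx P F j) ≤ zfun F j := by
  have h0 : P.x 0 ≤ zfun F j := by rw [P.x_zero]; exact bot_le
  exact Nat.findGreatest_spec (P := fun i => P.x i ≤ zfun F j) (Nat.zero_le _) h0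

lemma sIdx_max {j k : ℕ} (h : sIdx P F j < k) (hk : k ≤ P.n) : ¬ P.x k ≤ zfun F j :=
  Nat.findGreatest_is_greatest h hk

include hF in
lemma sIdx_lt {j : ℕ} (hj : j < F.card - 1) : sIdx P F j < P.n := by
  rcases eq_or_lt_of_le (sIdx_le P F j) with h | h
  · exfalso
    have h1 : P.x (sIdx P F j) ≤ zfun F j := sIdx_spec P F j
    rw [h, P.x_last] at h1
    have h2 : zfun F j < zfun F (F.card - 1) := zfun_lt hj (by omega)
    rw [zfun_last (P.x_last ▸ hF P.n (le_refl _))] at h2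
    exact absurd (le_antisymm le_top h1 ▸ h2) (lt_irrefl _)
  · exact h

/-- Position of the `i`-th partition point in the enumeration, with junk value. -/
noncomputable def posP (i : ℕ) : ℕ :=
  if h : i ≤ P.n then posOf (hF i h) else F.card - 1

include hF in
lemma zfun_posP {i : ℕ} (h : i ≤ P.n) : zfun F (posP P F hF i) = P.x i := by
  simp only [posP, dif_pos h]; exact zfun_posOf _

include hF in
lemma posP_le_card (i : ℕ) : posP P F hF i ≤ F.card - 1 := by
  by_cases h : i ≤ P.n
  · simp only [posP, dif_pos h]; exact Nat.le_sub_one_of_lt (posOf_lt _)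
  · simp only [posP, dif_neg h]
    exact le_refl _

include hF in
lemma posP_mono : ∀ i, posP P F hF i ≤ posP P F hF (i + 1) := by
  intro i
  by_cases h1 : i + 1 ≤ P.n
  · have h0 : i ≤ P.n := Nat.le_of_succ_le h1
    have hx : P.x i ≤ P.x (i + 1) := P.mono i (Nat.lt_of_succ_le h1)
    by_contra hc
    have : zfun F (posP P F hF (i+1)) < zfun F (posP P F hF i) := by
      apply zfun_lt (Nat.lt_of_not_le hc)
      simp only [posP, dif_pos h0]
      exact posOf_lt _
    rw [zfun_posP P F hF h0, zfun_posP P F hF h1] at this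
    exact absurd hx (not_le.2 this)
  · have h2 : posP P F hF (i + 1) = F.card - 1 := dif_neg h1
    rw [h2]
    exact posP_le_card P F hF i

include hF in
lemma posP_zero : posP P F hF 0 = 0 := by
  have h := zfun_posP P F hF (Nat.zero_le P.n)
  rw [P.x_zero] at h
  by_contra hc
  have h2 : zfun F 0 < zfun F (posP P F hF 0) := by
    apply zfun_lt (Nat.pos_of_ne_zero (fun h3 => hc h3))
    simp only [posP, dif_pos (Nat.zero_le P.n)]
    exact posOf_lt _
  rw [h, zfun_zero (P.x_zero ▸ hF 0 (Nat.zero_le _))] at h2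
  exact absurd h2 (not_lt.2 bot_le)

include hF in
lemma posP_last : posP P F hF P.n = F.card - 1 := by
  have h := zfun_posP P F hF (le_refl P.n)
  rw [P.x_last] at h
  rcases eq_or_lt_of_le (posP_le_card P F hF P.n) with he | hl
  · exact he
  · exfalso
    have h2 : zfun F (posP P F hF P.n) < zfun F (F.card - 1) := by
      apply zfun_lt hl
      have : (⊤:K) ∈ F := P.x_last ▸ hF P.n (le_refl _)
      have : 0 < F.card := Finset.card_pos.2 ⟨⊤, this⟩
      omega
    rw [h] at h2
    exact absurd h2 (not_lt.2 le_top)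

include hF in
lemma sIdx_eq {i j : ℕ} (hi : i < P.n) (hj1 : posP P F hF i ≤ j)
    (hj2 : j < posP P F hF (i + 1)) : sIdx P F j = i := by
  have hjcard : j < F.card := by
    have := posP_le_card P F hF (i+1)
    have hc : 0 < F.card := Finset.card_pos.2 ⟨P.x 0, hF 0 (Nat.zero_le _)⟩
    omega
  have hxi : P.x i ≤ zfun F j := by
    rw [← zfun_posP P F hF hi.le]
    exact zfun_mono F hj1
  have hge : i ≤ sIdx P F j := Nat.le_findGreatest hi.le hxi
  rcases eq_or_lt_of_le hge with h | h
  · exact h.symm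
  · exfalso
    have h1 : P.x (i + 1) ≤ P.x (sIdx P F j) :=
      P.x_mono (Nat.succ_le_of_lt h) (sIdx_le P F j)
    have h2 : P.x (sIdx P F j) ≤ zfun F j := sIdx_spec P F j
    have h3 : zfun F j < zfun F (posP P F hF (i+1)) := by
      apply zfun_lt hj2
      simp only [posP, dif_pos (Nat.succ_le_of_lt hi)]
      exact posOf_lt _
    rw [zfun_posP P F hF (Nat.succ_le_of_lt hi)] at h3
    exact absurd ((h1.trans h2).trans_lt h3) (lt_irrefl _)

include hF in
/-- The key regrouping identity. -/
lemma regroup (f G : K → ℝ) :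
    ∑ i ∈ Finset.range P.n, f (P.t (i + 1)) * (G (P.x (i + 1)) - G (P.x i))
      = ∑ j ∈ Finset.range (F.card - 1),
          f (P.t (sIdx P F j + 1)) * (G (zfun F (j + 1)) - G (zfun F j)) := by
  rw [show Finset.range (F.card - 1) = Finset.Ico (posP P F hF 0) (posP P F hF P.n) by
      rw [posP_zero P F hF, posP_last P F hF, Finset.range_eq_Ico],
    ← sum_Ico_partition (posP P F hF) (posP_mono P F hF)
      (fun j => f (P.t (sIdx P F j + 1)) * (G (zfun F (j + 1)) - G (zfun F j))) P.n]
  apply Finset.sum_congr rfl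
  intro i hi
  rw [Finset.mem_range] at hi
  have hstep : ∀ j ∈ Finset.Ico (posP P F hF i) (posP P F hF (i+1)),
      f (P.t (sIdx P F j + 1)) * (G (zfun F (j + 1)) - G (zfun F j))
        = f (P.t (i + 1)) * (G (zfun F (j + 1)) - G (zfun F j)) := by
    intro j hj
    rw [Finset.mem_Ico] at hj
    rw [sIdx_eq P F hF hi hj.1 hj.2]
  rw [Finset.sum_congr rfl hstep, ← Finset.mul_sum,
    sum_Ico_telescope (fun j => G (zfun F j)) (posP_mono P F hF i),
    zfun_posP P F hF (Nat.succ_le_of_lt hi), zfun_posP P F hF hi.le]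

end Merge

section Aux
variable {K : Type*} [LinearOrder K] [BoundedOrder K]

lemma varSums_nonempty (G : K → ℝ) : (varSums G (⊥ : K) ⊤).Nonempty := by
  refine ⟨|G ⊤ - G ⊥|, 1, fun i => if i = 0 then ⊥ else ⊤, rfl, rfl, ?_, by simp⟩
  intro i hi
  interval_cases i
  simp

lemma sSup_varSums_nonneg (G : K → ℝ) (hG : BddAbove (varSums G (⊥ : K) ⊤)) :
    0 ≤ sSup (varSums G (⊥ : K) ⊤) := by
  obtain ⟨v, hv⟩ := varSums_nonempty G
  have h2 : v ≤ sSup _ := le_csSup hG hv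
  obtain ⟨n, x, _, _, _, rfl⟩ := hv
  exact le_trans (Finset.sum_nonneg fun i _ => abs_nonneg _) h2

lemma varsum_le (G : K → ℝ) {n : ℕ} {x : ℕ → K} (hG : BddAbove (varSums G (⊥ : K) ⊤))
    (h0 : x 0 = ⊥) (hn : x n = ⊤) (hm : ∀ i < n, x i ≤ x (i + 1)) :
    ∑ i ∈ Finset.range n, |G (x (i + 1)) - G (x i)| ≤ sSup (varSums G (⊥ : K) ⊤) :=
  le_csSup hG ⟨n, x, h0, hn, hm, rfl⟩

variable (P : TaggedPartition K ⊥ ⊤) (F : Finset K) (hF : ∀ i, i ≤ P.n → P.x i ∈ F)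

include hF in
lemma zfun_succ_le {j : ℕ} (hj : j < F.card - 1) :
    zfun F (j + 1) ≤ P.x (sIdx P F j + 1) := by
  have hlt : sIdx P F j < P.n := sIdx_lt P F hF hj
  have hmem : P.x (sIdx P F j + 1) ∈ F := hF _ (Nat.succ_le_of_lt hlt)
  have h1 : zfun F j < P.x (sIdx P F j + 1) :=
    lt_of_not_ge fun hc =>
      sIdx_max P F (Nat.lt_succ_self _) (Nat.succ_le_of_lt hlt) hc
  rw [← zfun_posOf hmem] at h1 ⊢
  exact zfun_mono F (Nat.succ_le_of_lt (lt_of_zfun_lt h1))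

include hF in
lemma zfun_succ_mem {j : ℕ} (hj : j < F.card - 1) :
    zfun F (j + 1) ∈ Set.Ioc (P.x (sIdx P F j)) (P.x (sIdx P F j + 1)) := by
  refine ⟨lt_of_le_of_lt (sIdx_spec P F j) (zfun_lt (Nat.lt_succ_self j) ?_),
    zfun_succ_le P F hF hj⟩
  omega

end Aux

section Comparison
variable {K : Type*} [LinearOrder K] [TopologicalSpace K] [OrderTopology K] [BoundedOrder K]

lemma comparison (f G : K → ℝ) (hG : BddAbove (varSums G (⊥ : K) ⊤)) {ε : ℝ} (hε : 0 < ε)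
    {P Q : TaggedPartition K ⊥ ⊤} (hP : P.IsFine (gaugeOf f ε)) (hQ : Q.IsFine (gaugeOf f ε)) :
    |riemannSum f G P - riemannSum f G Q| ≤ 2 * ε * sSup (varSums G (⊥ : K) ⊤) := by
  classical
  set F : Finset K := (Finset.range (P.n + 1)).image P.x ∪ (Finset.range (Q.n + 1)).image Q.x
    with hFdef
  have hFP : ∀ i, i ≤ P.n → P.x i ∈ F := fun i hi => Finset.mem_union_left _
    (Finset.mem_image_of_mem _ (Finset.mem_range.2 (Nat.lt_succ_of_le hi)))
  have hFQ : ∀ i, i ≤ Q.n → Q.x i ∈ F := fun i hi => Finset.mem_union_right _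
    (Finset.mem_image_of_mem _ (Finset.mem_range.2 (Nat.lt_succ_of_le hi)))
  have hbot : (⊥ : K) ∈ F := P.x_zero ▸ hFP 0 (Nat.zero_le _)
  have htop : (⊤ : K) ∈ F := P.x_last ▸ hFP P.n le_rfl
  have hrs : riemannSum f G P - riemannSum f G Q
      = ∑ j ∈ Finset.range (F.card - 1),
          (f (P.t (sIdx P F j + 1)) - f (Q.t (sIdx Q F j + 1)))
            * (G (zfun F (j + 1)) - G (zfun F j)) := by
    rw [riemannSum, riemannSum, regroup P F hFP f G, regroup Q F hFQ f G,
      add_sub_add_left_eq_sub, ← Finset.sum_sub_distrib]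
    exact Finset.sum_congr rfl fun j _ => by ring
  rw [hrs]
  calc |∑ j ∈ Finset.range (F.card - 1),
          (f (P.t (sIdx P F j + 1)) - f (Q.t (sIdx Q F j + 1)))
            * (G (zfun F (j + 1)) - G (zfun F j))|
      ≤ ∑ j ∈ Finset.range (F.card - 1),
          |(f (P.t (sIdx P F j + 1)) - f (Q.t (sIdx Q F j + 1)))
            * (G (zfun F (j + 1)) - G (zfun F j))| := Finset.abs_sum_le_sum_abs _ _
    _ ≤ ∑ j ∈ Finset.range (F.card - 1), (2 * ε) * |G (zfun F (j + 1)) - G (zfun F j)| := by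
        apply Finset.sum_le_sum
        intro j hj
        rw [Finset.mem_range] at hj
        rw [abs_mul]
        apply mul_le_mul_of_nonneg_right _ (abs_nonneg _)
        have h1 : |f (zfun F (j + 1)) - f (P.t (sIdx P F j + 1))| < ε :=
          abs_lt_of_mem_gaugeOf (hP _ (sIdx_lt P F hFP hj) (zfun_succ_mem P F hFP hj))
        have h2 : |f (zfun F (j + 1)) - f (Q.t (sIdx Q F j + 1))| < ε :=
          abs_lt_of_mem_gaugeOf (hQ _ (sIdx_lt Q F hFQ hj) (zfun_succ_mem Q F hFQ hj))
        calc |f (P.t (sIdx P F j + 1)) - f (Q.t (sIdx Q F j + 1))|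
            ≤ |f (zfun F (j + 1)) - f (P.t (sIdx P F j + 1))|
              + |f (zfun F (j + 1)) - f (Q.t (sIdx Q F j + 1))| := by
              rw [abs_sub_comm (f (zfun F (j+1)))]
              exact abs_sub_le _ _ _
          _ ≤ 2 * ε := by linarith
    _ = (2 * ε) * ∑ j ∈ Finset.range (F.card - 1), |G (zfun F (j + 1)) - G (zfun F j)| := by
        rw [Finset.mul_sum]
    _ ≤ (2 * ε) * sSup (varSums G (⊥ : K) ⊤) := by
        apply mul_le_mul_of_nonneg_left _ (by linarith)
        exact varsum_le G hG (zfun_zero hbot) (zfun_last htop)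
          (fun j _ => zfun_mono F (Nat.le_succ j))

end Comparison

theorem continuous_integrable_of_bounded_variation {K : Type*} [LinearOrder K]
    [TopologicalSpace K] [OrderTopology K] [CompactSpace K] [BoundedOrder K]
    (G f : K → ℝ) (hG : BddAbove (varSums G (⊥ : K) ⊤)) (hf : Continuous f) :
    ∃ A, HasIntegral f G (⊥ : K) ⊤ A ∧
      |A| ≤ |f ⊥ * G ⊥| + (⨆ x : K, |f x|) * sSup (varSums G (⊥ : K) ⊤) := by
  classical
  haveI : Nonempty K := ⟨⊥⟩
  set V := sSup (varSums G (⊥ : K) ⊤) with hVdef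
  have hV0 : 0 ≤ V := sSup_varSums_nonneg G hG
  set M := ⨆ x : K, |f x| with hMdef
  have hbdd : BddAbove (Set.range fun x : K => |f x|) := by
    have := isCompact_univ.bddAbove_image (hf.abs.continuousOn (s := Set.univ))
    rwa [Set.image_univ] at this
  have hM : ∀ x, |f x| ≤ M := fun x => le_ciSup hbdd x
  have hM0 : 0 ≤ M := le_trans (abs_nonneg _) (hM ⊥)
  have hSbound : ∀ P : TaggedPartition K ⊥ ⊤, |riemannSum f G P| ≤ |f ⊥ * G ⊥| + M * V := by
    intro P
    refine (abs_add_le _ _).trans (add_le_add_right ?_ _)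
    calc |∑ i ∈ Finset.range P.n, f (P.t (i + 1)) * (G (P.x (i + 1)) - G (P.x i))|
        ≤ ∑ i ∈ Finset.range P.n, |f (P.t (i + 1)) * (G (P.x (i + 1)) - G (P.x i))| :=
          Finset.abs_sum_le_sum_abs _ _
      _ ≤ ∑ i ∈ Finset.range P.n, M * |G (P.x (i + 1)) - G (P.x i)| := by
          apply Finset.sum_le_sum
          intro i _
          rw [abs_mul]
          exact mul_le_mul_of_nonneg_right (hM _) (abs_nonneg _)
      _ = M * ∑ i ∈ Finset.range P.n, |G (P.x (i + 1)) - G (P.x i)| := by rw [Finset.mul_sum]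
      _ ≤ M * V := mul_le_mul_of_nonneg_left
          (varsum_le G hG P.x_zero P.x_last P.mono) hM0
  have hεpos : ∀ k : ℕ, (0:ℝ) < 1 / (k + 1) := fun k => by positivity
  have hgauge : ∀ k : ℕ, IsGauge K (⊥ : K) ⊤ (gaugeOf f (1 / (k + 1))) :=
    fun k => gaugeOf_isGauge hf (hεpos k)
  choose Pk hPk using fun k : ℕ => exists_fine_partition (hgauge k)
  set a : ℕ → ℝ := fun k => riemannSum f G (Pk k) with hadef
  have hfine : ∀ {k N : ℕ}, N ≤ k → (Pk k).IsFine (gaugeOf f (1 / (N + 1))) := by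
    intro k N h i hi y hy
    refine gaugeOf_mono f ?_ _ (hPk k i hi hy)
    apply one_div_le_one_div_of_le (by positivity)
    have : (N : ℝ) ≤ k := Nat.cast_le.2 h
    linarith
  have hdist : ∀ n m N : ℕ, N ≤ n → N ≤ m → dist (a n) (a m) ≤ 2 * (1 / (N + 1)) * V := by
    intro n m N hn hm
    rw [Real.dist_eq]
    exact comparison f G hG (hεpos N) (hfine hn) (hfine hm)
  have hb0 : Tendsto (fun N : ℕ => 2 * (1 / ((N : ℝ) + 1)) * V) atTop (nhds 0) := by
    have h2 : Tendsto (fun N : ℕ => 2 * (1 / ((N : ℝ) + 1)) * V) atTop (nhds (2 * 0 * V)) :=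
      (tendsto_one_div_add_atTop_nhds_zero_nat.const_mul 2).mul_const V
    simpa using h2
  obtain ⟨A, hA⟩ := cauchySeq_tendsto_of_complete (cauchySeq_of_le_tendsto_0 _ hdist hb0)
  refine ⟨A, ?_, ?_⟩
  · intro ε hε
    obtain ⟨k, hk⟩ := (hb0.eventually (gt_mem_nhds hε)).exists
    refine ⟨gaugeOf f (1 / (k + 1)), hgauge k, ?_⟩
    intro P hP
    have hle : |riemannSum f G P - A| ≤ 2 * (1 / (k + 1)) * V := by
      have ht : Tendsto (fun l => |riemannSum f G P - a l|) atTop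
          (nhds |riemannSum f G P - A|) := (tendsto_const_nhds.sub hA).abs
      refine le_of_tendsto ht (Filter.eventually_atTop.2 ⟨k, fun l hl => ?_⟩)
      exact comparison f G hG (hεpos k) hP (hfine hl)
    exact lt_of_le_of_lt hle hk
  · exact le_of_tendsto hA.abs (Filter.Eventually.of_forall fun k => hSbound (Pk k))
end

section
/- Let K be a compact line, G : K → ℝ amenable, and I = [a,b] ⊆ K a compact subinterval. Then the indicator function f_I is G-integrable on K if and only if the restriction f|_I is G-integrable on I, and in that case ∫_K f_I dG = ∫_I f dG − f(a) L_G(a). -/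
open Set Filter MeasureTheory

set_option linter.unusedSectionVars false

section Aux1

variable {K : Type*} [LinearOrder K] [TopologicalSpace K] [OrderTopology K]

namespace TaggedPartition

variable {a b : K}

theorem x_mono' (P : TaggedPartition K a b) : ∀ j ≤ P.n, ∀ i ≤ j, P.x i ≤ P.x j := by
  intro j
  induction j with
  | zero => intro _ i hi; interval_cases i; exact le_rfl
  | succ j ih =>
    intro hj i hi
    rcases Nat.eq_or_lt_of_le hi with rfl | h
    · exact le_rfl
    · exact (ih (by omega) i (by omega)).trans (P.mono j (by omega))

theorem x_mem (P : TaggedPartition K a b) {i : ℕ} (hi : i ≤ P.n) : P.x i ∈ Set.Icc a b := by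
  constructor
  · have := P.x_mono' i hi 0 (Nat.zero_le _)
    rwa [P.x_zero] at this
  · have := P.x_mono' P.n le_rfl i hi
    rwa [P.x_last] at this

theorem tag_mem' (P : TaggedPartition K a b) {i : ℕ} (hi : i < P.n) :
    P.t (i + 1) ∈ Set.Icc a b := by
  obtain ⟨h1, h2⟩ := P.tag_mem i hi
  exact ⟨(P.x_mem (Nat.le_of_lt hi)).1.trans h1,
    h2.trans (P.x_mem (by omega : i + 1 ≤ P.n)).2⟩

/-- The trivial partition of `[a,a]`. -/
def triv (a : K) : TaggedPartition K a a where
  n := 0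
  x := fun _ => a
  t := fun _ => a
  x_zero := rfl
  x_last := rfl
  mono := fun i hi => absurd hi (Nat.not_lt_zero i)
  tag_mem := fun i hi => absurd hi (Nat.not_lt_zero i)

theorem triv_isFine (a : K) (δ : K → Set K) : (triv a).IsFine δ :=
  fun i hi => absurd hi (Nat.not_lt_zero i)

/-- Append one extra interval `(c, d]` with tag `tag` to a partition of `[a,c]`. -/
def append {c : K} (P : TaggedPartition K a c) (d tag : K) (hcd : c ≤ d)
    (htag : tag ∈ Set.Icc c d) : TaggedPartition K a d where
  n := P.n + 1
  x := fun i => if i ≤ P.n then P.x i else d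
  t := fun i => if i ≤ P.n then P.t i else tag
  x_zero := by simp [P.x_zero]
  x_last := by simp
  mono := by
    intro i hi
    show (if i ≤ P.n then P.x i else d) ≤ (if i + 1 ≤ P.n then P.x (i + 1) else d)
    rcases Nat.lt_or_ge i P.n with h | h
    · rcases Nat.lt_or_ge (i+1) P.n with h2 | h2
      · rw [if_pos (by omega), if_pos (by omega)]; exact P.mono i h
      · have : i + 1 = P.n := by omega
        rw [if_pos (by omega), if_pos (by omega)]; exact P.mono i h
    · have : i = P.n := by omega
      subst this
      rw [if_pos le_rfl, if_neg (by omega), P.x_last]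
      exact hcd
  tag_mem := by
    intro i hi
    show (if i + 1 ≤ P.n then P.t (i + 1) else tag) ∈
      Set.Icc (if i ≤ P.n then P.x i else d) (if i + 1 ≤ P.n then P.x (i + 1) else d)
    rcases Nat.lt_or_ge i P.n with h | h
    · rw [if_pos (by omega), if_pos (by omega), if_pos (by omega)]
      exact P.tag_mem i h
    · have : i = P.n := by omega
      subst this
      rw [if_pos le_rfl, if_neg (by omega), if_neg (by omega), P.x_last]
      exact htag

theorem append_isFine {c : K} {P : TaggedPartition K a c} {d tag : K} {hcd : c ≤ d}
    {htag : tag ∈ Set.Icc c d} {δ : K → Set K} (hP : P.IsFine δ)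
    (h : Set.Ioc c d ⊆ δ tag) : (P.append d tag hcd htag).IsFine δ := by
  intro i hi
  have hn : (P.append d tag hcd htag).n = P.n + 1 := rfl
  rw [hn] at hi
  show Set.Ioc (if i ≤ P.n then P.x i else d) (if i + 1 ≤ P.n then P.x (i + 1) else d) ⊆
    δ (if i + 1 ≤ P.n then P.t (i + 1) else tag)
  rcases Nat.lt_or_ge i P.n with h' | h'
  · rw [if_pos (by omega), if_pos (by omega), if_pos (by omega)]
    exact hP i h'
  · have : i = P.n := by omega
    subst this
    rw [if_pos le_rfl, if_neg (by omega), if_neg (by omega), P.x_last]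
    exact h

theorem isFine_mono {P : TaggedPartition K a b} {δ₁ δ₂ : K → Set K}
    (h : ∀ t, δ₁ t ⊆ δ₂ t) (hP : P.IsFine δ₁) : P.IsFine δ₂ :=
  fun i hi => (hP i hi).trans (h _)

end TaggedPartition

theorem ordConnected_interior {s : Set K} (hs : s.OrdConnected) :
    (interior s).OrdConnected := by
  constructor
  intro x hx y hy z hz
  rcases eq_or_lt_of_le hz.1 with rfl | h1
  · exact hx
  rcases eq_or_lt_of_le hz.2 with rfl | h2
  · exact hy
  exact mem_interior.2 ⟨Set.Ioo x y, fun w hw =>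
    hs.out (interior_subset hx) (interior_subset hy) ⟨hw.1.le, hw.2.le⟩,
    isOpen_Ioo, h1, h2⟩

theorem exists_ordConnected_open {U : Set K} (hU : IsOpen U) {t : K} (ht : t ∈ U) :
    ∃ O : Set K, IsOpen O ∧ O.OrdConnected ∧ t ∈ O ∧ O ⊆ U := by
  obtain ⟨p, q, _, hnhds, hsub⟩ := exists_Icc_mem_subset_of_mem_nhds (hU.mem_nhds ht)
  exact ⟨interior (Set.Icc p q), isOpen_interior, ordConnected_interior Set.ordConnected_Icc,
    mem_interior_iff_mem_nhds.2 hnhds, interior_subset.trans hsub⟩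

end Aux1
section Aux2

variable {K : Type*} [LinearOrder K] [TopologicalSpace K] [OrderTopology K]

namespace TaggedPartition

variable {a m b : K}

/-- Concatenation of a partition of `[a,m]` and a partition of `[m,b]`. -/
def concat (P : TaggedPartition K a m) (Q : TaggedPartition K m b) :
    TaggedPartition K a b where
  n := P.n + Q.n
  x := fun i => if i ≤ P.n then P.x i else Q.x (i - P.n)
  t := fun i => if i ≤ P.n then P.t i else Q.t (i - P.n)
  x_zero := by simp [P.x_zero]
  x_last := by
    show (if P.n + Q.n ≤ P.n then P.x (P.n + Q.n) else Q.x (P.n + Q.n - P.n)) = b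
    rcases Nat.eq_zero_or_pos Q.n with h | h
    · rw [if_pos (by omega), show P.n + Q.n = P.n by omega, P.x_last]
      have := Q.x_last
      rw [h, Q.x_zero] at this
      exact this
    · rw [if_neg (by omega), show P.n + Q.n - P.n = Q.n by omega, Q.x_last]
  mono := by
    intro i hi
    show (if i ≤ P.n then P.x i else Q.x (i - P.n)) ≤
      (if i + 1 ≤ P.n then P.x (i + 1) else Q.x (i + 1 - P.n))
    rcases Nat.lt_or_ge i P.n with h | h
    · rw [if_pos (by omega), if_pos (by omega)]; exact P.mono i (by omega)
    · rcases Nat.eq_or_lt_of_le h with h2 | h2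
      · have hi' : i = P.n := h2.symm
        subst hi'
        rw [if_pos le_rfl, if_neg (by omega), P.x_last,
          show P.n + 1 - P.n = 1 by omega]
        have h0 := Q.mono 0 (by omega)
        rwa [Q.x_zero] at h0
      · rw [if_neg (by omega), if_neg (by omega), show i + 1 - P.n = (i - P.n) + 1 by omega]
        exact Q.mono (i - P.n) (by omega)
  tag_mem := by
    intro i hi
    show (if i + 1 ≤ P.n then P.t (i + 1) else Q.t (i + 1 - P.n)) ∈
      Set.Icc (if i ≤ P.n then P.x i else Q.x (i - P.n))
        (if i + 1 ≤ P.n then P.x (i + 1) else Q.x (i + 1 - P.n))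
    rcases Nat.lt_or_ge i P.n with h | h
    · rw [if_pos (by omega), if_pos (by omega), if_pos (by omega)]
      exact P.tag_mem i (by omega)
    · rcases Nat.eq_or_lt_of_le h with h2 | h2
      · -- i = P.n
        have hi' : i = P.n := h2.symm
        subst hi'
        rw [if_pos le_rfl, if_neg (by omega), if_neg (by omega), P.x_last,
          show P.n + 1 - P.n = 1 by omega]
        have h0 := Q.tag_mem 0 (by omega)
        rwa [Q.x_zero] at h0
      · rw [if_neg (by omega), if_neg (by omega), if_neg (by omega),
          show i + 1 - P.n = (i - P.n) + 1 by omega]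
        exact Q.tag_mem (i - P.n) (by omega)

variable (P : TaggedPartition K a m) (Q : TaggedPartition K m b)

theorem concat_n : (P.concat Q).n = P.n + Q.n := rfl

theorem concat_x_of_le {i : ℕ} (h : i ≤ P.n) : (P.concat Q).x i = P.x i := if_pos h

theorem concat_t_of_le {i : ℕ} (h : i ≤ P.n) : (P.concat Q).t i = P.t i := if_pos h

theorem concat_x_ge {i : ℕ} (h : P.n ≤ i) : (P.concat Q).x i = Q.x (i - P.n) := by
  rcases Nat.eq_or_lt_of_le h with h2 | h2
  · show (if i ≤ P.n then P.x i else Q.x (i - P.n)) = Q.x (i - P.n)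
    rw [if_pos (by omega), ← h2, show P.n - P.n = 0 by omega, P.x_last, Q.x_zero]
  · exact if_neg (by omega)

theorem concat_t_ge {i : ℕ} (h : P.n < i) : (P.concat Q).t i = Q.t (i - P.n) :=
  if_neg (by omega)

theorem concat_isFine {δ : K → Set K} (hP : P.IsFine δ) (hQ : Q.IsFine δ) :
    (P.concat Q).IsFine δ := by
  intro i hi
  rw [concat_n] at hi
  rcases Nat.lt_or_ge i P.n with h | h
  · rw [concat_x_of_le P Q (by omega), concat_x_of_le P Q (by omega),
      concat_t_of_le P Q (by omega)]
    exact hP i h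
  · rw [concat_x_ge P Q (by omega), concat_x_ge P Q (by omega),
      concat_t_ge P Q (by omega), show i + 1 - P.n = (i - P.n) + 1 by omega]
    exact hQ (i - P.n) (by omega)

theorem concat_sum (h G : K → ℝ) :
    riemannSum h G (P.concat Q) = riemannSum h G P + (riemannSum h G Q - h m * G m) := by
  unfold riemannSum
  rw [concat_n, Finset.sum_range_add]
  have h1 : ∀ i ∈ Finset.range P.n,
      h ((P.concat Q).t (i + 1)) * (G ((P.concat Q).x (i + 1)) - G ((P.concat Q).x i)) =
      h (P.t (i + 1)) * (G (P.x (i + 1)) - G (P.x i)) := by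
    intro i hi
    rw [Finset.mem_range] at hi
    rw [concat_t_of_le P Q (by omega), concat_x_of_le P Q (by omega),
      concat_x_of_le P Q (by omega)]
  have h2 : ∀ j ∈ Finset.range Q.n,
      h ((P.concat Q).t (P.n + j + 1)) * (G ((P.concat Q).x (P.n + j + 1)) -
        G ((P.concat Q).x (P.n + j))) =
      h (Q.t (j + 1)) * (G (Q.x (j + 1)) - G (Q.x j)) := by
    intro j hj
    rw [concat_t_ge P Q (by omega), concat_x_ge P Q (by omega), concat_x_ge P Q (by omega),
      show P.n + j + 1 - P.n = j + 1 by omega, show P.n + j - P.n = j by omega]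
  rw [Finset.sum_congr rfl h1, Finset.sum_congr rfl h2]
  ring

end TaggedPartition

/-- Cousin's lemma: every gauge on a compact interval admits a fine tagged partition. -/
theorem cousin [CompactSpace K] {a b : K} (hab : a ≤ b) {δ : K → Set K}
    (hδ : IsGauge K a b δ) : ∃ P : TaggedPartition K a b, P.IsFine δ := by
  set S : Set K := {c | c ∈ Set.Icc a b ∧ ∃ P : TaggedPartition K a c, P.IsFine δ} with hS
  have haS : a ∈ S := ⟨⟨le_rfl, hab⟩, TaggedPartition.triv a, TaggedPartition.triv_isFine a δ⟩
  obtain ⟨s₀, hs₀cl, hlub'⟩ :=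
    (isClosed_closure (s := S)).isCompact.exists_isLUB ⟨a, subset_closure haS⟩
  have hlub : IsLUB S s₀ := by
    constructor
    · intro c hc; exact hlub'.1 (subset_closure hc)
    · intro y hy
      exact hlub'.2 (by rw [upperBounds_closure]; exact hy)
  have hs₀ab : s₀ ∈ Set.Icc a b := ⟨hlub.1 haS, hlub.2 fun c hc => hc.1.2⟩
  obtain ⟨hs₀δ, hs₀conn, U, hUopen, hUeq⟩ := hδ s₀ hs₀ab
  have hs₀U : s₀ ∈ U := by rw [hUeq] at hs₀δ; exact hs₀δ.1
  have hs₀S : s₀ ∈ S := by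
    rcases eq_or_lt_of_le (hlub.1 haS) with rfl | hlt
    · exact haS
    · obtain ⟨l, hl, hIoc⟩ := exists_Ioc_subset_of_mem_nhds (hUopen.mem_nhds hs₀U) ⟨a, hlt⟩
      have hc : ∃ c ∈ S, l < c := by
        by_contra h
        push_neg at h
        exact absurd (hlub.2 h) (not_le.2 hl)
      obtain ⟨c, hcS, hlc⟩ := hc
      have hcs : c ≤ s₀ := hlub.1 hcS
      obtain ⟨⟨hac, hcb⟩, P, hPfine⟩ := hcS
      refine ⟨hs₀ab, P.append s₀ s₀ hcs ⟨hcs, le_rfl⟩, P.append_isFine hPfine ?_⟩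
      intro y hy
      rw [hUeq]
      exact ⟨hIoc ⟨lt_of_lt_of_le hlc hy.1.le |>.trans_le (le_rfl), hy.2⟩,
        hac.trans_lt hy.1 |>.le, hy.2.trans hs₀ab.2⟩
  rcases eq_or_lt_of_le hs₀ab.2 with heq | hlt
  · rw [heq] at hs₀S; exact hs₀S.2
  · exfalso
    obtain ⟨-, P, hPfine⟩ := hs₀S
    by_cases hsucc : ∃ s', s₀ ⋖ s'
    · obtain ⟨s', hcov⟩ := hsucc
      have hs'b : s' ≤ b := by
        by_contra h
        exact hcov.2 hlt (not_le.1 h)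
      have hs'ab : s' ∈ Set.Icc a b := ⟨hs₀ab.1.trans hcov.1.le, hs'b⟩
      have hmem : s' ∈ δ s' := (hδ s' hs'ab).1
      have : s' ∈ S := by
        refine ⟨hs'ab, P.append s' s' hcov.1.le ⟨hcov.1.le, le_rfl⟩,
          P.append_isFine hPfine ?_⟩
        intro y hy
        have : y = s' := le_antisymm hy.2 (by
          by_contra h
          exact hcov.2 hy.1 (not_le.1 h))
        rwa [this]
      exact absurd (hlub.1 this) (not_le.2 hcov.1)
    · obtain ⟨u, hu, hIco⟩ := exists_Ico_subset_of_mem_nhds (hUopen.mem_nhds hs₀U) ⟨b, hlt⟩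
      have hne : (Set.Ioo s₀ (min u b)).Nonempty := by
        by_contra h
        rw [Set.not_nonempty_iff_eq_empty] at h
        refine hsucc ⟨min u b, lt_min hu hlt, fun z hz hz' => ?_⟩
        exact Set.eq_empty_iff_forall_notMem.1 h z ⟨hz, hz'⟩
      obtain ⟨s', hs'⟩ := hne
      have hs'u : s' < u := hs'.2.trans_le (min_le_left _ _)
      have hs'b : s' ≤ b := (hs'.2.trans_le (min_le_right _ _)).le
      have : s' ∈ S := by
        refine ⟨⟨hs₀ab.1.trans hs'.1.le, hs'b⟩,
          P.append s' s₀ hs'.1.le ⟨le_rfl, hs'.1.le⟩, P.append_isFine hPfine ?_⟩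
        intro y hy
        rw [hUeq]
        exact ⟨hIco ⟨hy.1.le, hy.2.trans_lt hs'u⟩, hs₀ab.1.trans hy.1.le, hy.2.trans hs'b⟩
      exact absurd (hlub.1 this) (not_le.2 hs'.1)

end Aux2
open Topology

section Aux3

variable {K : Type*} [LinearOrder K] [TopologicalSpace K] [OrderTopology K] [BoundedOrder K]

theorem covBy_unique' {c c' x : K} (h : c ⋖ x) (h' : c' ⋖ x) : c = c' := by
  rcases lt_trichotomy c c' with hlt | heq | hgt
  · exact absurd h'.1 (h.2 hlt)
  · exact heq
  · exact absurd h.1 (h'.2 hgt)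

theorem nonempty_Ioo_of_dense {x l : K} (hl : l < x) (hcov : ¬ ∃ y, y ⋖ x) :
    (Set.Ioo l x).Nonempty := by
  by_contra h
  rw [Set.not_nonempty_iff_eq_empty] at h
  exact hcov ⟨l, hl, fun z hz hz' => Set.eq_empty_iff_forall_notMem.1 h z ⟨hz, hz'⟩⟩

theorem Icc_bot_top' : Set.Icc (⊥ : K) ⊤ = Set.univ := by
  ext y; simp

/-- Left control: a point `c < a` so that `G` is `ε`-close to `Lfun G a` on `[c, a)`
and `(c,a] ⊆ W` for a prescribed open neighborhood `W` of `a`. -/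
theorem left_ctrl {G : K → ℝ} (hG : Amenable G) {a : K} (ha : a ≠ ⊥) {ε : ℝ} (hε : 0 < ε)
    {W : Set K} (hW : IsOpen W) (haW : a ∈ W) :
    ∃ c, c < a ∧ Set.Ioc c a ⊆ W ∧ ∀ y, c ≤ y → y < a → |G y - Lfun G a| ≤ ε := by
  classical
  have hbot : (⊥ : K) < a := ha.bot_lt
  by_cases hcov : ∃ y, y ⋖ a
  · obtain ⟨c, hc⟩ := hcov
    have hL : Lfun G a = G c := by
      unfold Lfun
      rw [if_neg ha, dif_pos ⟨c, hc⟩]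
      exact congrArg G (covBy_unique' (Exists.choose_spec (⟨c, hc⟩ : ∃ y, y ⋖ a)) hc)
    refine ⟨c, hc.1, ?_, ?_⟩
    · intro y hy
      rcases eq_or_lt_of_le hy.2 with rfl | h
      · exact haW
      · exact absurd h (hc.2 hy.1)
    · intro y hcy hya
      have hyc : y = c := le_antisymm (by
        by_contra h
        exact hc.2 (not_le.1 h) hya) hcy
      rw [hyc, hL]
      simpa using hε.le
  · obtain ⟨l, hl⟩ := hG.2.1 a ha hcov
    have hbasis := nhdsLT_basis_of_exists_lt (⟨⊥, hbot⟩ : ∃ y, y < a)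
    have hnb : (𝓝[<] a).NeBot := by
      rw [hbasis.neBot_iff]
      intro l' hl'
      exact nonempty_Ioo_of_dense hl' hcov
    have hLfun : Lfun G a = l := by
      unfold Lfun
      rw [if_neg ha, dif_neg hcov]
      exact leftLim_eq_of_tendsto (h := hnb) hl
    have h1 : {y | |G y - l| ≤ ε} ∈ 𝓝[<] a := by
      have := hl (Metric.closedBall_mem_nhds l hε)
      refine Filter.mem_of_superset this ?_
      intro y hy
      simpa [Real.dist_eq] using hy
    obtain ⟨l₁, hl₁, hsub₁⟩ := hbasis.mem_iff.1 h1
    obtain ⟨l₂, hl₂, hsub₂⟩ := exists_Ioc_subset_of_mem_nhds (hW.mem_nhds haW) ⟨⊥, hbot⟩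
    obtain ⟨c, hc⟩ := nonempty_Ioo_of_dense (max_lt hl₁ hl₂) hcov
    have hcl₁ : l₁ < c := lt_of_le_of_lt (le_max_left _ _) hc.1
    have hcl₂ : l₂ < c := lt_of_le_of_lt (le_max_right _ _) hc.1
    refine ⟨c, hc.2, ?_, ?_⟩
    · intro y hy
      exact hsub₂ ⟨hcl₂.trans hy.1, hy.2⟩
    · intro y hcy hya
      rw [hLfun]
      exact hsub₁ ⟨hcl₁.trans_le hcy, hya⟩

/-- Right control: an open order-connected neighborhood of `b` on which `G` is
`ε`-close to `G b` to the right of `b`. -/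
theorem right_ctrl {G : K → ℝ} (hG : Amenable G) (b : K) {ε : ℝ} (hε : 0 < ε) :
    ∃ V : Set K, IsOpen V ∧ V.OrdConnected ∧ b ∈ V ∧
      ∀ y ∈ V, b ≤ y → |G y - G b| ≤ ε := by
  have h := hG.1 b
  have h1 : {y | |G y - G b| ≤ ε} ∈ 𝓝[≥] b := by
    have := h (Metric.closedBall_mem_nhds (G b) hε)
    refine Filter.mem_of_superset this ?_
    intro y hy
    simpa [Real.dist_eq] using hy
  obtain ⟨u, huo, hbu, husub⟩ := mem_nhdsWithin.1 h1
  obtain ⟨O, hO1, hO2, hO3, hO4⟩ := exists_ordConnected_open huo hbu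
  exact ⟨O, hO1, hO2, hO3, fun y hy hby => husub ⟨hO4 hy, hby⟩⟩

theorem Lfun_bot {G : K → ℝ} : Lfun G (⊥ : K) = 0 := by
  unfold Lfun; rw [if_pos rfl]

/-- On the full line a gauge assigns open order-connected neighborhoods. -/
theorem gauge_full {δ : K → Set K} (hδ : IsGauge K ⊥ ⊤ δ) (t : K) :
    t ∈ δ t ∧ (δ t).OrdConnected ∧ IsOpen (δ t) := by
  obtain ⟨h1, h2, U, hU, hUeq⟩ := hδ t (by simp)
  refine ⟨h1, h2, ?_⟩
  rw [hUeq, Icc_bot_top', Set.inter_univ]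
  exact hU

theorem gauge_inter_full {δ₁ δ₂ : K → Set K} (h₁ : IsGauge K ⊥ ⊤ δ₁)
    (h₂ : IsGauge K ⊥ ⊤ δ₂) : IsGauge K ⊥ ⊤ (fun t => δ₁ t ∩ δ₂ t) := by
  intro t _
  obtain ⟨m1, c1, o1⟩ := gauge_full h₁ t
  obtain ⟨m2, c2, o2⟩ := gauge_full h₂ t
  exact ⟨⟨m1, m2⟩, c1.inter c2, δ₁ t ∩ δ₂ t, o1.inter o2,
    by rw [Icc_bot_top', Set.inter_univ]⟩

/-- For tagged partitions of `[a,b]`, the Riemann sums of `f` and of the indicator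
of `[a,b]` applied to `f` agree. -/
theorem riemannSum_indicator_eq {a b : K} (hab : a ≤ b) (f G : K → ℝ)
    (Q : TaggedPartition K a b) :
    riemannSum ((Set.Icc a b).indicator f) G Q = riemannSum f G Q := by
  unfold riemannSum
  rw [Set.indicator_of_mem (by exact ⟨le_rfl, hab⟩) f]
  congr 1
  refine Finset.sum_congr rfl fun i hi => ?_
  rw [Finset.mem_range] at hi
  rw [Set.indicator_of_mem (Q.tag_mem' hi) f]

end Aux3
section LemA

open Topology

variable {K : Type*} [LinearOrder K] [TopologicalSpace K] [OrderTopology K]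
  [CompactSpace K] [BoundedOrder K] {G f : K → ℝ} {a b : K}

theorem lemmaA (hG : Amenable G) (hab : a ≤ b) {δB : K → Set K} (hδB : IsGauge K a b δB)
    {ε : ℝ} (hε : 0 < ε) :
    ∃ δ : K → Set K, IsGauge K ⊥ ⊤ δ ∧
      ∀ P : TaggedPartition K ⊥ ⊤, P.IsFine δ →
        ∃ Q : TaggedPartition K a b, Q.IsFine δB ∧
          |riemannSum ((Set.Icc a b).indicator f) G P -
            (riemannSum f G Q - f a * Lfun G a)| ≤ (|f a| + |f b|) * ε := by
  classical
  obtain ⟨V, hVopen, hVconn, hbV, hVctrl⟩ := right_ctrl hG b hε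
  obtain ⟨Lset, hLopen, hLconn, haL, hHL⟩ :
      ∃ Lset : Set K, IsOpen Lset ∧ Lset.OrdConnected ∧ a ∈ Lset ∧
        ∀ y, y < a → Set.Ioo y a ⊆ Lset → |G y - Lfun G a| ≤ ε := by
    by_cases ha : a = ⊥
    · refine ⟨Set.univ, isOpen_univ, Set.ordConnected_univ, Set.mem_univ a, ?_⟩
      intro y hy _
      rw [ha] at hy
      exact absurd hy (not_lt_bot)
    · obtain ⟨c, hca, -, hctrl⟩ := left_ctrl hG ha hε isOpen_univ (Set.mem_univ a)
      refine ⟨Set.Ioi c, isOpen_Ioi, Set.ordConnected_Ioi, hca, ?_⟩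
      intro y hy hsub
      have hyc : c ≤ y := by
        by_contra h
        exact lt_irrefl c (hsub ⟨not_le.1 h, hca⟩)
      exact hctrl y hyc hy
  have hO : ∀ t, a ≤ t → t ≤ b → ∃ O : Set K, IsOpen O ∧ O.OrdConnected ∧ t ∈ O ∧
      O ∩ Set.Icc a b ⊆ δB t := by
    intro t ht1 ht2
    obtain ⟨htδ, hconn, U, hU, hUeq⟩ := hδB t ⟨ht1, ht2⟩
    have htU : t ∈ U := by rw [hUeq] at htδ; exact htδ.1
    obtain ⟨O, h1, h2, h3, h4⟩ := exists_ordConnected_open hU htU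
    refine ⟨O, h1, h2, h3, ?_⟩
    rw [hUeq]
    exact Set.inter_subset_inter_left _ h4
  choose O hOopen hOconn hOmem hOsub using hO
  set δ : K → Set K := fun s =>
    if hs : s < a then Set.Iio a
    else if hs' : b < s then Set.Ioi b
    else (O s (not_lt.1 hs) (not_lt.1 hs')) ∩
      ((if s = a then Lset else Set.Ioi a) ∩ (if s = b then V else Set.Iio b))
    with hδdef
  have hδlt : ∀ s, s < a → δ s = Set.Iio a := by
    intro s hs; simp only [hδdef]; rw [dif_pos hs]
  have hδgt : ∀ s, b < s → δ s = Set.Ioi b := by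
    intro s hs; simp only [hδdef]
    rw [dif_neg (not_lt.2 (hab.trans hs.le)), dif_pos hs]
  have hδmid : ∀ s (h1 : a ≤ s) (h2 : s ≤ b), δ s = (O s h1 h2) ∩
      ((if s = a then Lset else Set.Ioi a) ∩ (if s = b then V else Set.Iio b)) := by
    intro s h1 h2; simp only [hδdef]
    rw [dif_neg (not_lt.2 h1), dif_neg (not_lt.2 h2)]
  have hgauge : IsGauge K ⊥ ⊤ δ := by
    intro s _
    have key : s ∈ δ s ∧ (δ s).OrdConnected ∧ IsOpen (δ s) := by
      by_cases hs : s < a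
      · rw [hδlt s hs]; exact ⟨hs, Set.ordConnected_Iio, isOpen_Iio⟩
      by_cases hs' : b < s
      · rw [hδgt s hs']; exact ⟨hs', Set.ordConnected_Ioi, isOpen_Ioi⟩
      have h1 : a ≤ s := not_lt.1 hs
      have h2 : s ≤ b := not_lt.1 hs'
      rw [hδmid s h1 h2]
      refine ⟨⟨hOmem s h1 h2, ?_, ?_⟩, (hOconn s h1 h2).inter ?_, (hOopen s h1 h2).inter ?_⟩
      · by_cases hsa : s = a
        · rw [if_pos hsa, hsa]; exact haL
        · rw [if_neg hsa]; exact lt_of_le_of_ne h1 (Ne.symm hsa)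
      · by_cases hsb : s = b
        · rw [if_pos hsb, hsb]; exact hbV
        · rw [if_neg hsb]; exact lt_of_le_of_ne h2 hsb
      · refine Set.OrdConnected.inter ?_ ?_ <;> split_ifs
        · exact hLconn
        · exact Set.ordConnected_Ioi
        · exact hVconn
        · exact Set.ordConnected_Iio
      · refine IsOpen.inter ?_ ?_ <;> split_ifs
        · exact hLopen
        · exact isOpen_Ioi
        · exact hVopen
        · exact isOpen_Iio
    exact ⟨key.1, key.2.1, δ s, key.2.2, by rw [Icc_bot_top', Set.inter_univ]⟩
  refine ⟨δ, hgauge, ?_⟩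
  intro P hP
  -- the clamp map
  set cl : K → K := fun y => max a (min b y) with hcldef
  have hcl_mono : ∀ {y z : K}, y ≤ z → cl y ≤ cl z :=
    fun h => max_le_max le_rfl (min_le_min le_rfl h)
  have hcl_bot : cl ⊥ = a := by
    show max a (min b ⊥) = a
    rw [min_eq_right bot_le, max_eq_left bot_le]
  have hcl_top : cl ⊤ = b := by
    show max a (min b ⊤) = b
    rw [min_eq_left le_top, max_eq_right hab]
  have hcl_of_mem : ∀ {y}, a ≤ y → y ≤ b → cl y = y := by
    intro y h1 h2
    show max a (min b y) = y
    rw [min_eq_right h2, max_eq_right h1]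
  have hcl_ge : ∀ y, a ≤ cl y := fun y => le_max_left _ _
  have hcl_le : ∀ y, cl y ≤ b := fun y => max_le hab (min_le_left _ _)
  have hcl_of_lt : ∀ {y}, y < a → cl y = a := by
    intro y h
    show max a (min b y) = a
    rw [min_eq_right (h.le.trans hab), max_eq_left h.le]
  have hcl_of_gt : ∀ {y}, b ≤ y → cl y = b := by
    intro y h
    show max a (min b y) = b
    rw [min_eq_left h, max_eq_right hab]
  have hcl_le_self : ∀ {y}, y ≤ b → y ≤ cl y := by
    intro y h
    show y ≤ max a (min b y)
    rw [min_eq_right h]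
    exact le_max_right _ _
  have hcl_ge_self : ∀ {y}, a ≤ y → cl y ≤ y :=
    fun h => max_le h (min_le_right _ _)
  set Q : TaggedPartition K a b :=
    { n := P.n
      x := fun i => cl (P.x i)
      t := fun i => cl (P.t i)
      x_zero := by show cl (P.x 0) = a; rw [P.x_zero]; exact hcl_bot
      x_last := by show cl (P.x P.n) = b; rw [P.x_last]; exact hcl_top
      mono := fun i hi => hcl_mono (P.mono i hi)
      tag_mem := fun i hi =>
        ⟨hcl_mono (P.tag_mem i hi).1, hcl_mono (P.tag_mem i hi).2⟩ } with hQdef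
  have hQn : Q.n = P.n := rfl
  have hQx : ∀ i, Q.x i = cl (P.x i) := fun _ => rfl
  have hQt : ∀ i, Q.t i = cl (P.t i) := fun _ => rfl
  -- fineness of Q
  have hQfine : Q.IsFine δB := by
    intro i hi
    rw [hQn] at hi
    rw [hQx, hQx, hQt]
    have hfine := hP i hi
    have htm := P.tag_mem i hi
    have hmn := P.mono i hi
    by_cases h1 : P.t (i + 1) < a
    · have hcc : cl (P.x i) = cl (P.x (i + 1)) := by
        rcases eq_or_lt_of_le hmn with he | hlt
        · rw [he]
        · rw [hδlt _ h1] at hfine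
          have hx1 : P.x (i + 1) < a := hfine ⟨hlt, le_rfl⟩
          rw [hcl_of_lt hx1, hcl_of_lt ((hmn.trans_lt hx1))]
      rw [hcc, Set.Ioc_self]
      exact Set.empty_subset _
    by_cases h2 : b < P.t (i + 1)
    · have hcc : cl (P.x i) = cl (P.x (i + 1)) := by
        rcases eq_or_lt_of_le hmn with he | hlt
        · rw [he]
        · rw [hδgt _ h2] at hfine
          have hxb : b ≤ P.x i := by
            by_contra h
            have hbmem : b ∈ Set.Ioc (P.x i) (P.x (i + 1)) :=
              ⟨not_le.1 h, h2.le.trans htm.2⟩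
            exact lt_irrefl b (hfine hbmem)
          rw [hcl_of_gt hxb, hcl_of_gt (hxb.trans hmn)]
      rw [hcc, Set.Ioc_self]
      exact Set.empty_subset _
    · have ha1 : a ≤ P.t (i + 1) := not_lt.1 h1
      have hb1 : P.t (i + 1) ≤ b := not_lt.1 h2
      have hxib : P.x i ≤ b := htm.1.trans hb1
      have hxi1a : a ≤ P.x (i + 1) := ha1.trans htm.2
      rw [hcl_of_mem ha1 hb1]
      intro y hy
      have hyIcc : y ∈ Set.Icc a b :=
        ⟨((hcl_ge _).trans_lt hy.1).le, hy.2.trans (hcl_le _)⟩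
      have hyIoc : y ∈ Set.Ioc (P.x i) (P.x (i + 1)) :=
        ⟨(hcl_le_self hxib).trans_lt hy.1, hy.2.trans (hcl_ge_self hxi1a)⟩
      have hyδ := hfine hyIoc
      rw [hδmid _ ha1 hb1] at hyδ
      exact hOsub _ ha1 hb1 ⟨hyδ.1, hyIcc⟩
  refine ⟨Q, hQfine, ?_⟩
  -- term-by-term identity
  have K2 : ∀ i < P.n,
      (Set.Icc a b).indicator f (P.t (i + 1)) * (G (P.x (i + 1)) - G (P.x i)) -
        f (cl (P.t (i + 1))) * (G (cl (P.x (i + 1))) - G (cl (P.x i)))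
      = (if P.t (i + 1) = a ∧ P.x i < a then f a * (G a - G (P.x i)) else 0)
      + (if P.t (i + 1) = b ∧ b < P.x (i + 1) then f b * (G (P.x (i + 1)) - G b) else 0) := by
    intro i hi
    have hfine := hP i hi
    have htm := P.tag_mem i hi
    have hmn := P.mono i hi
    by_cases h1 : P.t (i + 1) < a
    · have hni : P.t (i + 1) ∉ Set.Icc a b := fun h => absurd h.1 (not_le.2 h1)
      rw [Set.indicator_of_notMem hni]
      have hcc : cl (P.x i) = cl (P.x (i + 1)) := by
        rcases eq_or_lt_of_le hmn with he | hlt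
        · rw [he]
        · rw [hδlt _ h1] at hfine
          have hx1 : P.x (i + 1) < a := hfine ⟨hlt, le_rfl⟩
          rw [hcl_of_lt hx1, hcl_of_lt ((hmn.trans_lt hx1))]
      rw [hcc, if_neg, if_neg]
      · ring
      · rintro ⟨he, -⟩; rw [he] at h1; exact absurd hab (not_le.2 h1)
      · rintro ⟨he, -⟩; rw [he] at h1; exact lt_irrefl a h1
    by_cases h2 : b < P.t (i + 1)
    · have hni : P.t (i + 1) ∉ Set.Icc a b := fun h => absurd h.2 (not_le.2 h2)
      rw [Set.indicator_of_notMem hni]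
      have hcc : cl (P.x i) = cl (P.x (i + 1)) := by
        rcases eq_or_lt_of_le hmn with he | hlt
        · rw [he]
        · rw [hδgt _ h2] at hfine
          have hxb : b ≤ P.x i := by
            by_contra h
            have hbmem : b ∈ Set.Ioc (P.x i) (P.x (i + 1)) :=
              ⟨not_le.1 h, h2.le.trans htm.2⟩
            exact lt_irrefl b (hfine hbmem)
          rw [hcl_of_gt hxb, hcl_of_gt (hxb.trans hmn)]
      rw [hcc, if_neg, if_neg]
      · ring
      · rintro ⟨he, -⟩; rw [he] at h2; exact lt_irrefl b h2
      · rintro ⟨he, -⟩; rw [he] at h2; exact absurd hab (not_le.2 h2)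
    · have ha1 : a ≤ P.t (i + 1) := not_lt.1 h1
      have hb1 : P.t (i + 1) ≤ b := not_lt.1 h2
      have hxib : P.x i ≤ b := htm.1.trans hb1
      have hxi1a : a ≤ P.x (i + 1) := ha1.trans htm.2
      rw [Set.indicator_of_mem (Set.mem_Icc.2 ⟨ha1, hb1⟩) f, hcl_of_mem ha1 hb1]
      rw [hδmid _ ha1 hb1] at hfine
      have hA : P.x i < a → P.t (i + 1) = a := by
        intro hxa
        by_contra hne
        have hamem : a ∈ Set.Ioc (P.x i) (P.x (i + 1)) := ⟨hxa, hxi1a⟩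
        have := (hfine hamem).2.1
        rw [if_neg hne] at this
        exact lt_irrefl a this
      have hB : b < P.x (i + 1) → P.t (i + 1) = b := by
        intro hxb
        by_contra hne
        have hbmem : P.x (i + 1) ∈ Set.Ioc (P.x i) (P.x (i + 1)) :=
          ⟨(htm.1.trans hb1).trans_lt hxb, le_rfl⟩
        have := (hfine hbmem).2.2
        rw [if_neg hne] at this
        exact absurd hxb (not_lt.2 this.le)
      by_cases hxa : P.x i < a <;> by_cases hxb : b < P.x (i + 1)
      · have hta := hA hxa
        have htb := hB hxb
        have haeb : a = b := hta ▸ htb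
        rw [if_pos ⟨hta, hxa⟩, if_pos ⟨htb, hxb⟩, hcl_of_lt hxa, hcl_of_gt hxb.le, hta]
        rw [← haeb]
        ring
      · have hta := hA hxa
        rw [if_pos ⟨hta, hxa⟩, if_neg (fun h => hxb h.2), hcl_of_lt hxa,
          hcl_of_mem hxi1a (not_lt.1 hxb), hta]
        ring
      · have htb := hB hxb
        rw [if_neg (fun h => hxa h.2), if_pos ⟨htb, hxb⟩, hcl_of_gt hxb.le,
          hcl_of_mem (not_lt.1 hxa) hxib, htb]
        ring
      · rw [if_neg (fun h => hxa h.2), if_neg (fun h => hxb h.2),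
          hcl_of_mem hxi1a (not_lt.1 hxb), hcl_of_mem (not_lt.1 hxa) hxib]
        ring
  -- sum decomposition
  set ind : K → ℝ := (Set.Icc a b).indicator f with hinddef
  set StrSum : ℝ := ∑ i ∈ Finset.range P.n,
    (if P.t (i + 1) = a ∧ P.x i < a then f a * (G a - G (P.x i)) else 0) with hStrdef
  set OverSum : ℝ := ∑ i ∈ Finset.range P.n,
    (if P.t (i + 1) = b ∧ b < P.x (i + 1) then f b * (G (P.x (i + 1)) - G b) else 0)
    with hOverdef
  have hsum : riemannSum ind G P - riemannSum f G Q
      = (ind ⊥ * G ⊥ - f a * G a) + (StrSum + OverSum) := by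
    unfold riemannSum
    have e1 : ∑ i ∈ Finset.range Q.n, f (Q.t (i + 1)) * (G (Q.x (i + 1)) - G (Q.x i))
        = ∑ i ∈ Finset.range P.n, f (cl (P.t (i + 1))) *
            (G (cl (P.x (i + 1))) - G (cl (P.x i))) := by
      rw [hQn]
    have e2 : ∑ i ∈ Finset.range P.n,
        (ind (P.t (i + 1)) * (G (P.x (i + 1)) - G (P.x i)) -
          f (cl (P.t (i + 1))) * (G (cl (P.x (i + 1))) - G (cl (P.x i))))
        = StrSum + OverSum := by
      rw [hStrdef, hOverdef, ← Finset.sum_add_distrib]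
      exact Finset.sum_congr rfl fun i hi => K2 i (Finset.mem_range.1 hi)
    rw [Finset.sum_sub_distrib] at e2
    rw [e1]
    linear_combination e2
  -- bound on OverSum
  have hOver : |OverSum| ≤ |f b| * ε := by
    by_cases hex : ∃ i, i < P.n ∧ P.t (i + 1) = b ∧ b < P.x (i + 1)
    · obtain ⟨i₁, hi₁n, hcond⟩ := hex
      have huniq : ∀ j ∈ Finset.range P.n, j ≠ i₁ →
          (if P.t (j + 1) = b ∧ b < P.x (j + 1) then f b * (G (P.x (j + 1)) - G b) else 0)
            = 0 := by
        intro j hjm hne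
        rw [Finset.mem_range] at hjm
        rw [if_neg]
        rintro ⟨hc1, hc2⟩
        rcases lt_or_gt_of_ne hne with h | h
        · have hle := P.x_mono' i₁ (by omega) (j + 1) (by omega)
          have h3 := (P.tag_mem i₁ hi₁n).1
          rw [hcond.1] at h3
          exact lt_irrefl b ((hc2.trans_le hle).trans_le h3)
        · have hle := P.x_mono' j (by omega) (i₁ + 1) (by omega)
          have h3 := (P.tag_mem j hjm).1
          rw [hc1] at h3
          exact lt_irrefl b ((hcond.2.trans_le hle).trans_le h3)
      rw [hOverdef, Finset.sum_eq_single_of_mem i₁ (Finset.mem_range.2 hi₁n) huniq,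
        if_pos hcond, abs_mul]
      refine mul_le_mul_of_nonneg_left ?_ (abs_nonneg _)
      have hxlt : P.x i₁ < P.x (i₁ + 1) :=
        lt_of_le_of_lt ((P.tag_mem i₁ hi₁n).1.trans hcond.1.le) hcond.2
      have hmem := hP i₁ hi₁n ⟨hxlt, le_rfl⟩
      rw [hcond.1, hδmid b hab le_rfl] at hmem
      have hV := hmem.2.2
      rw [if_pos rfl] at hV
      exact hVctrl _ hV hcond.2.le
    · rw [hOverdef, Finset.sum_eq_zero, abs_zero]
      · positivity
      · intro j hjm
        rw [Finset.mem_range] at hjm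
        exact if_neg fun hc => hex ⟨j, hjm, hc⟩
  by_cases ha : a = ⊥
  · have hStr0 : StrSum = 0 := by
      rw [hStrdef]
      refine Finset.sum_eq_zero fun j _ => if_neg ?_
      rintro ⟨-, hlt⟩
      rw [ha] at hlt
      exact not_lt_bot hlt
    have hind : ind ⊥ * G ⊥ = f a * G a := by
      rw [hinddef, Set.indicator_of_mem (Set.mem_Icc.2 ⟨ha.le, bot_le⟩) f, ha]
    have hL0 : Lfun G a = 0 := by rw [ha]; exact Lfun_bot
    rw [hStr0] at hsum
    have : riemannSum ind G P - (riemannSum f G Q - f a * Lfun G a) = OverSum := by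
      rw [hL0]
      linear_combination hsum + hind
    rw [this]
    refine hOver.trans ?_
    have : |f b| * ε ≤ (|f a| + |f b|) * ε := by
      refine mul_le_mul_of_nonneg_right ?_ hε.le
      linarith [abs_nonneg (f a)]
    exact this
  · -- a ≠ ⊥ : find the straddling index
    have hex : ∃ j, a ≤ P.x j := ⟨P.n, by rw [P.x_last]; exact le_top⟩
    set j₀ := Nat.find hex with hj₀def
    have hspec : a ≤ P.x j₀ := Nat.find_spec hex
    have hj0 : j₀ ≠ 0 := by
      intro h
      rw [h, P.x_zero] at hspec
      exact ha (le_bot_iff.1 hspec)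
    have hjn : j₀ ≤ P.n := Nat.find_le (by rw [P.x_last]; exact le_top)
    set i₀ := j₀ - 1 with hi₀def
    have hxlt : P.x i₀ < a := not_le.1 (Nat.find_min hex (by omega))
    have hxge : a ≤ P.x (i₀ + 1) := by rw [show i₀ + 1 = j₀ by omega]; exact hspec
    have hi₀n : i₀ < P.n := by omega
    have htag0 : P.t (i₀ + 1) = a := by
      have htm := P.tag_mem i₀ hi₀n
      have hfine := hP i₀ hi₀n
      by_cases h1 : P.t (i₀ + 1) < a
      · rw [hδlt _ h1] at hfine
        have : P.x (i₀ + 1) < a := hfine ⟨hxlt.trans_le hxge, le_rfl⟩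
        exact absurd hxge (not_le.2 this)
      by_cases h2 : b < P.t (i₀ + 1)
      · rw [hδgt _ h2] at hfine
        have : b < a := hfine ⟨hxlt, hxge⟩
        exact absurd hab (not_le.2 this)
      · by_contra hne
        rw [hδmid _ (not_lt.1 h1) (not_lt.1 h2)] at hfine
        have := (hfine ⟨hxlt, hxge⟩).2.1
        rw [if_neg hne] at this
        exact lt_irrefl a this
    have hStrval : StrSum = f a * (G a - G (P.x i₀)) := by
      rw [hStrdef]
      rw [Finset.sum_eq_single_of_mem i₀ (Finset.mem_range.2 hi₀n) ?_, if_pos ⟨htag0, hxlt⟩]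
      intro j hjm hne
      rw [Finset.mem_range] at hjm
      rw [if_neg]
      rintro ⟨hc1, hc2⟩
      rcases lt_or_gt_of_ne hne with h | h
      · have h3 := (P.tag_mem j hjm).2
        rw [hc1] at h3
        have hle := P.x_mono' i₀ (by omega) (j + 1) (by omega)
        exact lt_irrefl a ((h3.trans hle).trans_lt hxlt)
      · have hle := P.x_mono' j (by omega) (i₀ + 1) (by omega)
        exact lt_irrefl a ((hxge.trans hle).trans_lt hc2)
    have hGval : |G (P.x i₀) - Lfun G a| ≤ ε := by
      refine hHL _ hxlt ?_
      intro y hy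
      have hyIoc : y ∈ Set.Ioc (P.x i₀) (P.x (i₀ + 1)) := ⟨hy.1, hy.2.le.trans hxge⟩
      have := hP i₀ hi₀n hyIoc
      rw [htag0, hδmid a le_rfl hab] at this
      have h2 := this.2.1
      rw [if_pos rfl] at h2
      exact h2
    have hind : ind ⊥ = 0 := by
      rw [hinddef]
      exact Set.indicator_of_notMem (fun h => ha (le_bot_iff.1 h.1)) f
    rw [hStrval, hind] at hsum
    have hkey : riemannSum ind G P - (riemannSum f G Q - f a * Lfun G a)
        = f a * (Lfun G a - G (P.x i₀)) + OverSum := by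
      linear_combination hsum
    rw [hkey]
    calc |f a * (Lfun G a - G (P.x i₀)) + OverSum|
        ≤ |f a * (Lfun G a - G (P.x i₀))| + |OverSum| := abs_add_le _ _
      _ ≤ |f a| * ε + |f b| * ε := by
          refine add_le_add ?_ hOver
          rw [abs_mul]
          refine mul_le_mul_of_nonneg_left ?_ (abs_nonneg _)
          rw [abs_sub_comm]
          exact hGval
      _ = (|f a| + |f b|) * ε := by ring

end LemA
section LemB

open Topology

variable {K : Type*} [LinearOrder K] [TopologicalSpace K] [OrderTopology K]
  [CompactSpace K] [BoundedOrder K] {G f : K → ℝ} {a b : K}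

theorem lemmaB (hG : Amenable G) (hab : a ≤ b) {δA : K → Set K} (hδA : IsGauge K ⊥ ⊤ δA)
    {ε : ℝ} (hε : 0 < ε) :
    ∃ δ' : K → Set K, IsGauge K a b δ' ∧
      ∀ Q : TaggedPartition K a b, Q.IsFine δ' →
        ∃ P : TaggedPartition K ⊥ ⊤, P.IsFine δA ∧
          |riemannSum ((Set.Icc a b).indicator f) G P -
            (riemannSum f G Q - f a * Lfun G a)| ≤ (|f a| + |f b|) * ε := by
  classical
  obtain ⟨V, hVopen, hVconn, hbV, hVctrl⟩ := right_ctrl hG b hε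
  refine ⟨fun t => δA t ∩ Set.Icc a b, ?_, ?_⟩
  · intro t ht
    obtain ⟨hm, hc, ho⟩ := gauge_full hδA t
    exact ⟨⟨hm, ht⟩, hc.inter Set.ordConnected_Icc, δA t, ho, rfl⟩
  intro Q hQ
  have hQA : Q.IsFine δA := fun i hi => (hQ i hi).trans Set.inter_subset_left
  -- right tail partition on [b, ⊤]
  have hδ₄gauge : IsGauge K b ⊤
      (fun t => (δA t ∩ (if t ≤ b then V else Set.Ioi b)) ∩ Set.Icc b ⊤) := by
    intro t ht
    obtain ⟨hm, hc, ho⟩ := gauge_full hδA t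
    refine ⟨⟨⟨hm, ?_⟩, ht⟩, (hc.inter ?_).inter Set.ordConnected_Icc,
      δA t ∩ (if t ≤ b then V else Set.Ioi b), ho.inter ?_, rfl⟩
    · by_cases h : t ≤ b
      · rw [if_pos h]
        have : t = b := le_antisymm h ht.1
        rw [this]; exact hbV
      · rw [if_neg h]; exact not_le.1 h
    · split_ifs
      exacts [hVconn, Set.ordConnected_Ioi]
    · split_ifs
      exacts [hVopen, isOpen_Ioi]
  obtain ⟨P4, hP4⟩ := cousin le_top hδ₄gauge
  have hP4A : P4.IsFine δA :=
    fun i hi => (hP4 i hi).trans (Set.inter_subset_left.trans Set.inter_subset_left)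
  set ind : K → ℝ := (Set.Icc a b).indicator f with hinddef
  have htail : ∀ i < P4.n, ind (P4.t (i + 1)) * (G (P4.x (i + 1)) - G (P4.x i))
      = if P4.t (i + 1) = b ∧ b < P4.x (i + 1) then f b * (G (P4.x (i + 1)) - G b)
        else 0 := by
    intro i hi
    have htm := P4.tag_mem i hi
    have hbx : b ≤ P4.x i := (P4.x_mem (Nat.le_of_lt hi)).1
    rcases eq_or_lt_of_le (hbx.trans htm.1) with he | hgt
    · have hτ : P4.t (i + 1) = b := he.symm
      have hxi : P4.x i = b := le_antisymm (htm.1.trans_eq hτ) hbx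
      have hb2 : b ≤ P4.x (i + 1) := hτ.ge.trans htm.2
      rcases eq_or_lt_of_le hb2 with he2 | hlt2
      · have hne : ¬ (P4.t (i + 1) = b ∧ b < P4.x (i + 1)) := by
          rintro ⟨-, h2⟩
          rw [← he2] at h2
          exact lt_irrefl b h2
        rw [if_neg hne, hτ, ← he2, hxi, sub_self, mul_zero]
      · rw [if_pos ⟨hτ, hlt2⟩, hτ, hxi, hinddef,
          Set.indicator_of_mem (Set.mem_Icc.2 ⟨hab, le_rfl⟩) f]
    · have hne : ¬ (P4.t (i + 1) = b ∧ b < P4.x (i + 1)) := by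
        rintro ⟨h1, -⟩
        rw [h1] at hgt
        exact lt_irrefl b hgt
      rw [if_neg hne, hinddef,
        Set.indicator_of_notMem (fun h => absurd h.2 (not_le.2 hgt)) f, zero_mul]
  have htailsum : |riemannSum ind G P4 - ind b * G b| ≤ |f b| * ε := by
    have hrw : riemannSum ind G P4 - ind b * G b
        = ∑ i ∈ Finset.range P4.n,
            (if P4.t (i + 1) = b ∧ b < P4.x (i + 1) then f b * (G (P4.x (i + 1)) - G b)
              else 0) := by
      unfold riemannSum
      rw [← Finset.sum_congr rfl (fun i hi => htail i (Finset.mem_range.1 hi))]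
      ring
    rw [hrw]
    by_cases hex : ∃ i, i < P4.n ∧ P4.t (i + 1) = b ∧ b < P4.x (i + 1)
    · obtain ⟨i₁, hi₁n, hcond⟩ := hex
      have huniq : ∀ j ∈ Finset.range P4.n, j ≠ i₁ →
          (if P4.t (j + 1) = b ∧ b < P4.x (j + 1) then f b * (G (P4.x (j + 1)) - G b)
            else 0) = 0 := by
        intro j hjm hne
        rw [Finset.mem_range] at hjm
        rw [if_neg]
        rintro ⟨hc1, hc2⟩
        rcases lt_or_gt_of_ne hne with h | h
        · have hle := P4.x_mono' i₁ (by omega) (j + 1) (by omega)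
          have h3 := (P4.tag_mem i₁ hi₁n).1
          rw [hcond.1] at h3
          exact lt_irrefl b ((hc2.trans_le hle).trans_le h3)
        · have hle := P4.x_mono' j (by omega) (i₁ + 1) (by omega)
          have h3 := (P4.tag_mem j hjm).1
          rw [hc1] at h3
          exact lt_irrefl b ((hcond.2.trans_le hle).trans_le h3)
      rw [Finset.sum_eq_single_of_mem i₁ (Finset.mem_range.2 hi₁n) huniq,
        if_pos hcond, abs_mul]
      refine mul_le_mul_of_nonneg_left ?_ (abs_nonneg _)
      have hxlt : P4.x i₁ < P4.x (i₁ + 1) :=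
        lt_of_le_of_lt ((P4.tag_mem i₁ hi₁n).1.trans hcond.1.le) hcond.2
      have hmem : P4.x (i₁ + 1) ∈ (δA (P4.t (i₁ + 1)) ∩
          (if P4.t (i₁ + 1) ≤ b then V else Set.Ioi b)) ∩ Set.Icc b ⊤ :=
        hP4 i₁ hi₁n ⟨hxlt, le_rfl⟩
      rw [hcond.1, if_pos le_rfl] at hmem
      exact hVctrl _ hmem.1.2 hcond.2.le
    · rw [Finset.sum_eq_zero, abs_zero]
      · positivity
      · intro j hjm
        rw [Finset.mem_range] at hjm
        exact if_neg fun hc => hex ⟨j, hjm, hc⟩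
  by_cases ha : a = ⊥
  · subst ha
    refine ⟨Q.concat P4, Q.concat_isFine P4 hQA hP4A, ?_⟩
    rw [Q.concat_sum P4 ind G]
    have hQsum : riemannSum ind G Q = riemannSum f G Q :=
      riemannSum_indicator_eq hab f G Q
    rw [hQsum, Lfun_bot]
    have : riemannSum f G Q + (riemannSum ind G P4 - ind b * G b) -
        (riemannSum f G Q - f ⊥ * 0) = riemannSum ind G P4 - ind b * G b := by ring
    rw [this]
    refine htailsum.trans ?_
    refine mul_le_mul_of_nonneg_right ?_ hε.le
    linarith [abs_nonneg (f ⊥)]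
  · -- a ≠ ⊥
    obtain ⟨hma, hca, hoa⟩ := gauge_full hδA a
    obtain ⟨c, hclt, hIocsub, hctrl⟩ := left_ctrl hG ha hε hoa hma
    -- piece on [⊥, c]
    have hδ₁gauge : IsGauge K ⊥ c (fun t => δA t ∩ Set.Icc ⊥ c) := by
      intro t ht
      obtain ⟨hm, hc', ho⟩ := gauge_full hδA t
      exact ⟨⟨hm, ht⟩, hc'.inter Set.ordConnected_Icc, δA t, ho, rfl⟩
    obtain ⟨P1, hP1⟩ := cousin bot_le hδ₁gauge
    have hP1A : P1.IsFine δA := fun i hi => (hP1 i hi).trans Set.inter_subset_left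
    have hP1sum : riemannSum ind G P1 = 0 := by
      unfold riemannSum
      rw [hinddef, Set.indicator_of_notMem (fun h => ha (le_bot_iff.1 h.1)) f, zero_mul,
        Finset.sum_eq_zero, add_zero]
      intro i him
      rw [Finset.mem_range] at him
      have htc : P1.t (i + 1) ≤ c := (P1.tag_mem' him).2
      rw [Set.indicator_of_notMem (fun h => absurd (h.1.trans htc) (not_le.2 hclt)) f,
        zero_mul]
    -- single-interval piece (c, a]
    set P2 : TaggedPartition K c a :=
      (TaggedPartition.triv c).append a a hclt.le ⟨hclt.le, le_rfl⟩ with hP2def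
    have hP2A : P2.IsFine δA :=
      TaggedPartition.append_isFine (TaggedPartition.triv_isFine c δA) hIocsub
    have hP2x0 : P2.x 0 = c := rfl
    have hP2x1 : P2.x 1 = a := rfl
    have hP2t1 : P2.t 1 = a := rfl
    have hP2n : P2.n = 1 := rfl
    have hP2sum : riemannSum ind G P2 = ind c * G c + f a * (G a - G c) := by
      unfold riemannSum
      rw [hP2n, Finset.sum_range_one, hP2x0, hP2x1, hP2t1, hinddef,
        Set.indicator_of_mem (Set.mem_Icc.2 ⟨le_rfl, hab⟩) f]
    -- assemble
    set P : TaggedPartition K ⊥ ⊤ := ((P1.concat P2).concat Q).concat P4 with hPdef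
    have hPfine : P.IsFine δA :=
      TaggedPartition.concat_isFine _ _
        (TaggedPartition.concat_isFine _ _
          (TaggedPartition.concat_isFine _ _ hP1A hP2A) hQA) hP4A
    refine ⟨P, hPfine, ?_⟩
    have hQsum : riemannSum ind G Q = riemannSum f G Q :=
      riemannSum_indicator_eq hab f G Q
    have hsum : riemannSum ind G P = riemannSum f G Q - f a * G c +
        (riemannSum ind G P4 - ind b * G b) := by
      rw [hPdef, TaggedPartition.concat_sum, TaggedPartition.concat_sum,
        TaggedPartition.concat_sum, hP1sum, hP2sum, hQsum, hinddef,
        Set.indicator_of_mem (Set.mem_Icc.2 ⟨le_rfl, hab⟩) f]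
      ring
    rw [hsum]
    have hGc : |G c - Lfun G a| ≤ ε := hctrl c le_rfl hclt
    have key : riemannSum f G Q - f a * G c + (riemannSum ind G P4 - ind b * G b) -
        (riemannSum f G Q - f a * Lfun G a)
        = f a * (Lfun G a - G c) + (riemannSum ind G P4 - ind b * G b) := by ring
    rw [key]
    calc |f a * (Lfun G a - G c) + (riemannSum ind G P4 - ind b * G b)|
        ≤ |f a * (Lfun G a - G c)| + |riemannSum ind G P4 - ind b * G b| := abs_add_le _ _
      _ ≤ |f a| * ε + |f b| * ε := by
          refine add_le_add ?_ htailsum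
          rw [abs_mul]
          refine mul_le_mul_of_nonneg_left ?_ (abs_nonneg _)
          rw [abs_sub_comm]
          exact hGc
      _ = (|f a| + |f b|) * ε := by ring

end LemB
theorem indicator_integral_subinterval {K : Type*} [LinearOrder K] [TopologicalSpace K]
    [OrderTopology K] [CompactSpace K] [BoundedOrder K] (G f : K → ℝ) (hG : Amenable G)
    (a b : K) (hab : a ≤ b) :
    ((∃ A, HasIntegral ((Set.Icc a b).indicator f) G (⊥ : K) ⊤ A) ↔
      ∃ B, HasIntegral f G a b B) ∧
    ∀ A B, HasIntegral ((Set.Icc a b).indicator f) G (⊥ : K) ⊤ A →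
      HasIntegral f G a b B → A = B - f a * Lfun G a := by
  have hC0 : (0:ℝ) ≤ |f a| + |f b| := by positivity
  constructor
  · constructor
    · rintro ⟨A, hA⟩
      refine ⟨A + f a * Lfun G a, ?_⟩
      intro ε hε
      set ε₂ : ℝ := ε / (2 * (|f a| + |f b| + 1)) with hε₂def
      have hε₂ : 0 < ε₂ := by positivity
      have hsmall : (|f a| + |f b|) * ε₂ < ε / 2 := by
        have he : (|f a| + |f b| + 1) * ε₂ = ε / 2 := by
          rw [hε₂def]; field_simp
        nlinarith
      obtain ⟨δA, hδAg, hδA⟩ := hA (ε / 2) (by positivity)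
      obtain ⟨δ', hδ'g, hkey⟩ := lemmaB (f := f) hG hab hδAg hε₂
      refine ⟨δ', hδ'g, ?_⟩
      intro Q hQ
      obtain ⟨P, hPfine, hbound⟩ := hkey Q hQ
      have h1 := hδA P hPfine
      have hre : riemannSum f G Q - (A + f a * Lfun G a) =
          (riemannSum ((Set.Icc a b).indicator f) G P - A) -
          (riemannSum ((Set.Icc a b).indicator f) G P -
            (riemannSum f G Q - f a * Lfun G a)) := by ring
      rw [hre]
      calc |_ - _| ≤ |riemannSum ((Set.Icc a b).indicator f) G P - A| +
            |riemannSum ((Set.Icc a b).indicator f) G P -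
              (riemannSum f G Q - f a * Lfun G a)| := abs_sub _ _
        _ < ε := by
            have := hbound.trans_lt hsmall
            linarith
    · rintro ⟨B, hB⟩
      refine ⟨B - f a * Lfun G a, ?_⟩
      intro ε hε
      set ε₂ : ℝ := ε / (2 * (|f a| + |f b| + 1)) with hε₂def
      have hε₂ : 0 < ε₂ := by positivity
      have hsmall : (|f a| + |f b|) * ε₂ < ε / 2 := by
        have he : (|f a| + |f b| + 1) * ε₂ = ε / 2 := by
          rw [hε₂def]; field_simp
        nlinarith
      obtain ⟨δB, hδBg, hδB⟩ := hB (ε / 2) (by positivity)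
      obtain ⟨δ, hδg, hkey⟩ := lemmaA (f := f) hG hab hδBg hε₂
      refine ⟨δ, hδg, ?_⟩
      intro P hP
      obtain ⟨Q, hQfine, hbound⟩ := hkey P hP
      have h1 := hδB Q hQfine
      have hre : riemannSum ((Set.Icc a b).indicator f) G P - (B - f a * Lfun G a) =
          (riemannSum ((Set.Icc a b).indicator f) G P -
            (riemannSum f G Q - f a * Lfun G a)) + (riemannSum f G Q - B) := by ring
      rw [hre]
      calc |_ + _| ≤ |riemannSum ((Set.Icc a b).indicator f) G P -
            (riemannSum f G Q - f a * Lfun G a)| + |riemannSum f G Q - B| := abs_add_le _ _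
        _ < ε := by
            have := hbound.trans_lt hsmall
            linarith
  · intro A B hA hB
    have key : ∀ ε : ℝ, 0 < ε → |A - (B - f a * Lfun G a)| < ε := by
      intro ε hε
      set ε₂ : ℝ := ε / (3 * (|f a| + |f b| + 1)) with hε₂def
      have hε₂ : 0 < ε₂ := by positivity
      have hsmall : (|f a| + |f b|) * ε₂ < ε / 3 := by
        have he : (|f a| + |f b| + 1) * ε₂ = ε / 3 := by
          rw [hε₂def]; field_simp
        nlinarith
      obtain ⟨δA, hδAg, hδA⟩ := hA (ε / 3) (by positivity)
      obtain ⟨δB, hδBg, hδB⟩ := hB (ε / 3) (by positivity)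
      obtain ⟨δ, hδg, hkey⟩ := lemmaA (f := f) hG hab hδBg hε₂
      obtain ⟨P, hPfine⟩ := cousin bot_le (gauge_inter_full hδg hδAg)
      have hPδ : P.IsFine δ := fun i hi => (hPfine i hi).trans Set.inter_subset_left
      have hPδA : P.IsFine δA := fun i hi => (hPfine i hi).trans Set.inter_subset_right
      obtain ⟨Q, hQfine, hbound⟩ := hkey P hPδ
      have h1 := hδA P hPδA
      have h2 := hδB Q hQfine
      have hre : A - (B - f a * Lfun G a) =
          -(riemannSum ((Set.Icc a b).indicator f) G P - A) +
          (riemannSum ((Set.Icc a b).indicator f) G P -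
            (riemannSum f G Q - f a * Lfun G a)) + (riemannSum f G Q - B) := by ring
      rw [hre]
      calc |_ + _ + _| ≤ |-(riemannSum ((Set.Icc a b).indicator f) G P - A)| +
            |riemannSum ((Set.Icc a b).indicator f) G P -
              (riemannSum f G Q - f a * Lfun G a)| + |riemannSum f G Q - B| :=
          abs_add_three _ _ _
        _ < ε := by
            rw [abs_neg]
            have := hbound.trans_lt hsmall
            linarith
    by_contra hne
    exact lt_irrefl _ (key _ (abs_pos.2 (sub_ne_zero.2 hne)))
end
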